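/- arXiv:2504.19527 — 5 statements merged into one kernel-verified Lean document; each statement's English description precedes it below -/
import Mathlib

section
/- Identifiability of the conditional average treatment effect CATE (Theorem 4.2). Assume monotone missing, strong ignorability, and sequential missing, and that P({A=a} ∩ {R₃=1}) > 0 for a ∈ {0,1}. For a ∈ {0,1}, let m_a : 𝒳 × ℝ × ℝ → ℝ be any measurable function such that m_a(X, S₁, S₂) is a version of the conditional expectation of Y given σ(X, S₁, S₂) under the conditional measure P(·|{A=a} ∩ {R₃=1}), and assume m_a(X, S₁(a), S₂(a)) is P-integrable. Then E[Y(1) − Y(0) | σ(X)] = E[ m₁(X, S₁(1), S₂(1)) − m₀(X, S₁(0), S₂(0)) | σ(X) ] P-almost surely. -/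
open MeasureTheory ProbabilityTheory

open MeasurableSpace
section Aux

variable {Ω : Type*} [mΩ : MeasurableSpace Ω] [StandardBorelSpace Ω]
  {μ : Measure Ω} [IsProbabilityMeasure μ]

lemma sup_eq_generateFrom_inter (m' m₁ : MeasurableSpace Ω) :
    m' ⊔ m₁ = MeasurableSpace.generateFrom
      {s | ∃ h, MeasurableSet[m'] h ∧ ∃ t, MeasurableSet[m₁] t ∧ s = h ∩ t} := by
  apply le_antisymm
  · refine sup_le ?_ ?_
    · intro s hs
      exact measurableSet_generateFrom ⟨s, hs, Set.univ, MeasurableSet.univ,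
        (Set.inter_univ s).symm⟩
    · intro s hs
      exact measurableSet_generateFrom ⟨Set.univ, MeasurableSet.univ, s, hs,
        (Set.univ_inter s).symm⟩
  · refine MeasurableSpace.generateFrom_le ?_
    rintro s ⟨h, hh, t, ht, rfl⟩
    exact ((le_sup_left : m' ≤ m' ⊔ m₁) _ hh).inter ((le_sup_right : m₁ ≤ m' ⊔ m₁) _ ht)

lemma isPiSystem_inter_sets (m' m₁ : MeasurableSpace Ω) :
    IsPiSystem {s | ∃ h, MeasurableSet[m'] h ∧ ∃ t, MeasurableSet[m₁] t ∧ s = h ∩ t} := by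
  rintro _ ⟨h1, hh1, t1, ht1, rfl⟩ _ ⟨h2, hh2, t2, ht2, rfl⟩ -
  refine ⟨h1 ∩ h2, hh1.inter hh2, t1 ∩ t2, ht1.inter ht2, ?_⟩
  ext x; simp only [Set.mem_inter_iff]; tauto

lemma mul_indicator_one_eq_indicator (f : Ω → ℝ) (s : Set Ω) :
    (fun ω => f ω * s.indicator (fun _ => (1 : ℝ)) ω) = s.indicator f := by
  funext ω
  by_cases h : ω ∈ s <;> simp [h]

/-- Lemma A: under conditional independence, the conditional expectation of an indicator of
an `m₂`-set given `m' ⊔ m₁` equals that given `m'`. -/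
lemma condexp_indicator_sup_of_condIndep {m' m₁ m₂ : MeasurableSpace Ω}
    (hm' : m' ≤ mΩ) (hm₁ : m₁ ≤ mΩ) (hm₂ : m₂ ≤ mΩ)
    (h : CondIndep m' m₁ m₂ hm' μ) {T : Set Ω} (hT : MeasurableSet[m₂] T) :
    μ[T.indicator (fun _ => (1:ℝ)) | m' ⊔ m₁] =ᵐ[μ] μ[T.indicator (fun _ => (1:ℝ)) | m'] := by
  letI : MeasurableSpace Ω := mΩ
  have hsup : m' ⊔ m₁ ≤ mΩ := sup_le hm' hm₁
  set f : Ω → ℝ := T.indicator (fun _ => (1:ℝ)) with hf_def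
  have hTm : MeasurableSet[mΩ] T := hm₂ _ hT
  have hfi : Integrable f μ := (integrable_const (1:ℝ)).indicator hTm
  have hgi : Integrable (μ[f | m']) μ := integrable_condExp
  -- key set-integral equality
  have key : ∀ s : Set Ω, MeasurableSet[m' ⊔ m₁] s →
      ∫ x in s, (μ[f | m']) x ∂μ = ∫ x in s, f x ∂μ := by
    intro s hs
    refine MeasurableSpace.induction_on_inter (m := m' ⊔ m₁)
      (C := fun s _ => ∫ x in s, (μ[f | m']) x ∂μ = ∫ x in s, f x ∂μ)
      (sup_eq_generateFrom_inter m' m₁) (isPiSystem_inter_sets m' m₁) ?_ ?_ ?_ ?_ s hs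
    · simp
    · rintro _ ⟨h', hh', t, ht, rfl⟩
      have hh'0 : MeasurableSet[mΩ] h' := hm' _ hh'
      have ht0 : MeasurableSet[mΩ] t := hm₁ _ ht
      -- RHS
      rw [hf_def, setIntegral_indicator hTm, setIntegral_const]
      -- LHS: ∫_{h'∩t} μ[f|m'] = ∫_{h'} 1_t * μ[f|m']
      have e1 : ∫ x in h' ∩ t, (μ[f | m']) x ∂μ
          = ∫ x in h', ((μ[f | m']) * t.indicator (fun _ => (1:ℝ))) x ∂μ := by
        rw [show ((μ[f | m']) * t.indicator (fun _ => (1:ℝ)))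
              = (fun ω => (μ[f | m']) ω * t.indicator (fun _ => (1:ℝ)) ω) from rfl,
          mul_indicator_one_eq_indicator, setIntegral_indicator ht0]
      have hint_t : Integrable ((μ[f | m']) * t.indicator (fun _ => (1:ℝ))) μ := by
        rw [show ((μ[f | m']) * t.indicator (fun _ => (1:ℝ)))
              = (fun ω => (μ[f | m']) ω * t.indicator (fun _ => (1:ℝ)) ω) from rfl,
          mul_indicator_one_eq_indicator]
        exact hgi.indicator ht0
      have e2 : ∫ x in h', ((μ[f | m']) * t.indicator (fun _ => (1:ℝ))) x ∂μ
          = ∫ x in h', (μ[(μ[f | m']) * t.indicator (fun _ => (1:ℝ)) | m']) x ∂μ :=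
        (setIntegral_condExp hm' hint_t hh').symm
      have e3 : μ[(μ[f | m']) * t.indicator (fun _ => (1:ℝ)) | m']
          =ᵐ[μ] (μ[f | m']) * μ[t.indicator (fun _ => (1:ℝ)) | m'] :=
        condExp_mul_of_stronglyMeasurable_left stronglyMeasurable_condExp hint_t
          ((integrable_const (1:ℝ)).indicator ht0)
      have e4 : (μ[f | m']) * μ[t.indicator (fun _ => (1:ℝ)) | m']
          =ᵐ[μ] μ[(t ∩ T).indicator (fun _ => (1:ℝ)) | m'] := by
        have := (condIndep_iff m' m₁ m₂ hm' hm₁ hm₂ μ).mp h t T ht hT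
        filter_upwards [this] with ω hω
        simp only [Pi.mul_apply] at hω ⊢
        rw [hf_def]
        rw [mul_comm]
        exact hω.symm
      have e5 : ∫ x in h', (μ[(t ∩ T).indicator (fun _ => (1:ℝ)) | m']) x ∂μ
          = ∫ x in h', (t ∩ T).indicator (fun _ => (1:ℝ)) x ∂μ :=
        setIntegral_condExp hm' ((integrable_const (1:ℝ)).indicator (ht0.inter hTm)) hh'
      rw [e1, e2,
        setIntegral_congr_ae (hm' _ hh') ((e3.trans e4).mono fun x hx _ => hx), e5,
        setIntegral_indicator (ht0.inter hTm), setIntegral_const, Set.inter_assoc]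
    · intro t ht hC
      have ht0 : MeasurableSet[mΩ] t := hsup _ ht
      have h1 := integral_add_compl ht0 hgi
      have h2 := integral_add_compl ht0 hfi
      have h3 : ∫ x, (μ[f | m']) x ∂μ = ∫ x, f x ∂μ := integral_condExp hm'
      linarith
    · intro g hdisj hg hC
      have hg0 : ∀ i, MeasurableSet[mΩ] (g i) := fun i => hsup _ (hg i)
      have H1 := hasSum_integral_iUnion hg0 hdisj hgi.integrableOn
      have H2 := hasSum_integral_iUnion hg0 hdisj hfi.integrableOn
      have : HasSum (fun n => ∫ x in g n, f x ∂μ) (∫ x in ⋃ n, g n, (μ[f | m']) x ∂μ) := by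
        refine H1.congr_fun fun n => (hC n).symm
      exact this.unique H2
  refine (ae_eq_condExp_of_forall_setIntegral_eq hsup hfi
    (fun s _ _ => hgi.integrableOn) (fun s hs _ => key s hs) ?_).symm
  exact ((stronglyMeasurable_condExp (m := m') (μ := μ) (f := f)).mono
    (le_sup_left : m' ≤ m' ⊔ m₁)).aestronglyMeasurable (μ := μ)


/-- Lemma B: factorization of the conditional expectation of a product `f * 1_T` under
conditional independence. -/
lemma condexp_mul_indicator_of_condIndep {m' m₁ m₂ : MeasurableSpace Ω}
    (hm' : m' ≤ mΩ) (hm₁ : m₁ ≤ mΩ) (hm₂ : m₂ ≤ mΩ)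
    (h : CondIndep m' m₁ m₂ hm' μ) {T : Set Ω} (hT : MeasurableSet[m₂] T)
    {f : Ω → ℝ} (hfm : StronglyMeasurable[m' ⊔ m₁] f) (hfi : Integrable f μ) :
    μ[fun ω => f ω * T.indicator (fun _ => (1:ℝ)) ω | m'] =ᵐ[μ]
      fun ω => (μ[f | m']) ω * (μ[T.indicator (fun _ => (1:ℝ)) | m']) ω := by
  letI : MeasurableSpace Ω := mΩ
  have hsup : m' ⊔ m₁ ≤ mΩ := sup_le hm' hm₁
  have hTm : MeasurableSet[mΩ] T := hm₂ _ hT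
  set g : Ω → ℝ := T.indicator (fun _ => (1:ℝ)) with hg_def
  have hgi : Integrable g μ := (integrable_const (1:ℝ)).indicator hTm
  have hfg : (fun ω => f ω * g ω) = T.indicator f := mul_indicator_one_eq_indicator f T
  have hfgi : Integrable (fun ω => f ω * g ω) μ := by rw [hfg]; exact hfi.indicator hTm
  -- bounds on conditional expectations of indicators
  have hcond_nonneg : ∀ᵐ ω ∂μ, 0 ≤ (μ[g | m']) ω := by
    refine condExp_nonneg ?_
    filter_upwards with ω
    exact Set.indicator_nonneg (fun _ _ => zero_le_one) ω
  have hcond_le_one : ∀ᵐ ω ∂μ, (μ[g | m']) ω ≤ 1 := by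
    have h1 : μ[g | m'] ≤ᵐ[μ] μ[(fun _ => (1:ℝ)) | m'] := by
      refine condExp_mono hgi (integrable_const 1) ?_
      filter_upwards with ω
      exact Set.indicator_le_self' (fun _ _ => zero_le_one) ω
    have h2 : μ[(fun _ => (1:ℝ)) | m'] = fun _ => (1:ℝ) := condExp_const hm' 1
    filter_upwards [h1] with ω hω
    simpa [h2] using hω
  have hAbound : ∀ᵐ ω ∂μ, 0 ≤ (μ[g | m' ⊔ m₁]) ω ∧ (μ[g | m' ⊔ m₁]) ω ≤ 1 := by
    have hA := condexp_indicator_sup_of_condIndep hm' hm₁ hm₂ h hT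
    rw [← hg_def] at hA
    filter_upwards [hA, hcond_nonneg, hcond_le_one] with ω h1 h2 h3
    rw [h1]; exact ⟨h2, h3⟩
  -- step 1: pull out f over m' ⊔ m₁
  have hstep1 : μ[fun ω => f ω * g ω | m' ⊔ m₁] =ᵐ[μ] fun ω => f ω * (μ[g | m' ⊔ m₁]) ω :=
    condExp_mul_of_stronglyMeasurable_left hfm hfgi hgi
  -- step 2: replace μ[g | m' ⊔ m₁] by μ[g | m']
  have hstep2 : (fun ω => f ω * (μ[g | m' ⊔ m₁]) ω) =ᵐ[μ] fun ω => f ω * (μ[g | m']) ω := by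
    have hA := condexp_indicator_sup_of_condIndep hm' hm₁ hm₂ h hT
    rw [← hg_def] at hA
    filter_upwards [hA] with ω hω
    rw [hω]
  -- integrability of f * μ[g|m']
  have hint2 : Integrable (fun ω => (μ[g | m']) ω * f ω) μ := by
    refine Integrable.mono' hfi.abs ?_ ?_
    · exact ((stronglyMeasurable_condExp.mono hm').aestronglyMeasurable.mul
        hfi.aestronglyMeasurable)
    · filter_upwards [hcond_nonneg, hcond_le_one] with ω h0 h1
      rw [Real.norm_eq_abs, abs_mul]
      calc |(μ[g | m']) ω| * |f ω| ≤ 1 * |f ω| := by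
            refine mul_le_mul_of_nonneg_right ?_ (abs_nonneg _)
            rw [abs_of_nonneg h0]; exact h1
        _ = |f ω| := one_mul _
  -- tower property
  have htower : μ[fun ω => f ω * g ω | m'] =ᵐ[μ] μ[fun ω => f ω * (μ[g | m']) ω | m'] := by
    have h1 : μ[μ[fun ω => f ω * g ω | m' ⊔ m₁] | m'] =ᵐ[μ] μ[fun ω => f ω * g ω | m'] :=
      condExp_condExp_of_le le_sup_left hsup
    have h2 : μ[μ[fun ω => f ω * g ω | m' ⊔ m₁] | m']
        =ᵐ[μ] μ[fun ω => f ω * (μ[g | m']) ω | m'] :=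
      condExp_congr_ae (hstep1.trans hstep2)
    exact h1.symm.trans h2
  -- pull out μ[g|m'] over m'
  have hpull : μ[fun ω => (μ[g | m']) ω * f ω | m']
      =ᵐ[μ] fun ω => (μ[g | m']) ω * (μ[f | m']) ω := by
    have := condExp_mul_of_stronglyMeasurable_left (m := m') (μ := μ) (g := f)
      stronglyMeasurable_condExp hint2 hfi
    exact this
  have hcomm : (fun ω => f ω * (μ[g | m']) ω) = fun ω => (μ[g | m']) ω * f ω := by
    funext ω; ring
  refine htower.trans ?_
  rw [hcomm]
  refine hpull.trans ?_
  filter_upwards with ω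
  ring


/-- The σ-algebra of sets whose trace on `S` agrees with the trace of an `mK`-measurable set. -/
def traceSpace {Ω : Type*} (mK : MeasurableSpace Ω) (S : Set Ω) : MeasurableSpace Ω where
  MeasurableSet' H := ∃ G, MeasurableSet[mK] G ∧ H ∩ S = G ∩ S
  measurableSet_empty := ⟨∅, MeasurableSet.empty, rfl⟩
  measurableSet_compl := by
    rintro H ⟨G, hG, hHG⟩
    refine ⟨Gᶜ, hG.compl, ?_⟩
    rw [Set.ext_iff] at hHG ⊢
    intro x
    have h := hHG x
    simp only [Set.mem_inter_iff, Set.mem_compl_iff] at h ⊢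
    tauto
  measurableSet_iUnion := by
    intro g hg
    choose G hG hHG using hg
    refine ⟨⋃ i, G i, MeasurableSet.iUnion hG, ?_⟩
    rw [Set.iUnion_inter, Set.iUnion_inter]
    exact Set.iUnion_congr hHG

end Aux




/-- **Identifiability of the CATE (Theorem 4.2).** Under monotone missing, strong
ignorability, and sequential missing, `E[Y(1) − Y(0) | σ(X)]` equals
`E[m₁(X, S₁(1), S₂(1)) − m₀(X, S₁(0), S₂(0)) | σ(X)]` `P`-a.s., where `m_a(X,S₁,S₂)` is any
version of `E[Y | σ(X,S₁,S₂)]` under `P(·|{A=a} ∩ {R₃=1})`. (Arm `1` is `true`, arm `0` is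
`false`.) -/
theorem stmt1
    {Ω 𝓧 : Type*} [mΩ : MeasurableSpace Ω] [StandardBorelSpace Ω] [Nonempty Ω]
    [m𝓧 : MeasurableSpace 𝓧] [StandardBorelSpace 𝓧]
    (P : Measure Ω) [IsProbabilityMeasure P]
    (X : Ω → 𝓧) (hX : Measurable X)
    (A : Ω → Bool) (hA : Measurable A)
    -- potential outcomes and their observed versions (consistency)
    (S₁ S₂ Y : Bool → Ω → ℝ)
    (hS₁ : ∀ a, Measurable (S₁ a)) (hS₂ : ∀ a, Measurable (S₂ a))
    (hYmeas : ∀ a, Measurable (Y a)) (hYint : ∀ a, Integrable (Y a) P)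
    (S₁o S₂o Yo : Ω → ℝ)
    (hS₁o : Measurable S₁o) (hS₂o : Measurable S₂o) (hYo : Measurable Yo)
    (hcons₁ : S₁o = fun ω => S₁ (A ω) ω)
    (hcons₂ : S₂o = fun ω => S₂ (A ω) ω)
    (hconsY : Yo = fun ω => Y (A ω) ω)
    -- missingness indicators
    (R₁ R₂ R₃ : Ω → Bool)
    (hR₁ : Measurable R₁) (hR₂ : Measurable R₂) (hR₃ : Measurable R₃)
    -- Assumption 1 (monotone missing): R₃ ≤ R₂ ≤ R₁
    (hmono32 : ∀ ω, R₃ ω = true → R₂ ω = true)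
    (hmono21 : ∀ ω, R₂ ω = true → R₁ ω = true)
    -- Assumption 2 (strong ignorability): (S₁(a), S₂(a), Y(a)) ⫫ A | σ(X), and overlap
    (hunconf : ∀ a : Bool, CondIndep (MeasurableSpace.comap X m𝓧)
      (MeasurableSpace.comap (fun ω => (S₁ a ω, S₂ a ω, Y a ω)) inferInstance)
      (MeasurableSpace.comap A inferInstance) hX.comap_le P)
    (e : Bool → 𝓧 → ℝ) (he : ∀ a, Measurable (e a))
    (heVer : ∀ a : Bool, (fun ω => e a (X ω)) =ᵐ[P]
      P[({ω | A ω = a}).indicator (fun _ => (1 : ℝ)) | MeasurableSpace.comap X m𝓧])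
    (hePos : ∀ a : Bool, ∀ᵐ ω ∂P, 0 < e a (X ω) ∧ e a (X ω) < 1)
    -- Assumption 4 (sequential missing, observed form)
    (hseq3 : CondIndep
      (MeasurableSpace.comap X m𝓧 ⊔ MeasurableSpace.comap A inferInstance
        ⊔ MeasurableSpace.comap S₁o inferInstance ⊔ MeasurableSpace.comap S₂o inferInstance)
      (MeasurableSpace.comap R₃ inferInstance) (MeasurableSpace.comap Yo inferInstance)
      (sup_le (sup_le (sup_le hX.comap_le hA.comap_le) hS₁o.comap_le) hS₂o.comap_le) P)
    (hseq2 : CondIndep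
      (MeasurableSpace.comap X m𝓧 ⊔ MeasurableSpace.comap A inferInstance
        ⊔ MeasurableSpace.comap S₁o inferInstance)
      (MeasurableSpace.comap R₂ inferInstance) (MeasurableSpace.comap S₂o inferInstance)
      (sup_le (sup_le hX.comap_le hA.comap_le) hS₁o.comap_le) P)
    (hseq1 : CondIndep (MeasurableSpace.comap X m𝓧 ⊔ MeasurableSpace.comap A inferInstance)
      (MeasurableSpace.comap R₁ inferInstance) (MeasurableSpace.comap S₁o inferInstance)
      (sup_le hX.comap_le hA.comap_le) P)
    -- positivity of the selection scores
    (hr₃pos : ∀ᵐ ω ∂P, 0 < (P[({ω' | R₃ ω' = true}).indicator (fun _ => (1 : ℝ)) |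
      MeasurableSpace.comap X m𝓧 ⊔ MeasurableSpace.comap A inferInstance
        ⊔ MeasurableSpace.comap S₁o inferInstance ⊔ MeasurableSpace.comap S₂o inferInstance]) ω)
    (hr₂pos : ∀ᵐ ω ∂P, 0 < (P[({ω' | R₂ ω' = true}).indicator (fun _ => (1 : ℝ)) |
      MeasurableSpace.comap X m𝓧 ⊔ MeasurableSpace.comap A inferInstance
        ⊔ MeasurableSpace.comap S₁o inferInstance]) ω)
    (hr₁pos : ∀ᵐ ω ∂P, 0 < (P[({ω' | R₁ ω' = true}).indicator (fun _ => (1 : ℝ)) |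
      MeasurableSpace.comap X m𝓧 ⊔ MeasurableSpace.comap A inferInstance]) ω)
    -- positive probability of being observed in each arm
    (hab : ∀ a : Bool, 0 < P ({ω | A ω = a} ∩ {ω | R₃ ω = true}))
    -- regression functions: versions of E[Y | σ(X,S₁,S₂)] under P(·|{A=a} ∩ {R₃=1})
    (m : Bool → 𝓧 × ℝ × ℝ → ℝ) (hm : ∀ a, Measurable (m a))
    (hmVer : ∀ a : Bool, (fun ω => m a (X ω, S₁o ω, S₂o ω))
      =ᵐ[P[|{ω | A ω = a} ∩ {ω | R₃ ω = true}]]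
      (P[|{ω | A ω = a} ∩ {ω | R₃ ω = true}])[Yo |
        MeasurableSpace.comap X m𝓧 ⊔ MeasurableSpace.comap S₁o inferInstance
          ⊔ MeasurableSpace.comap S₂o inferInstance])
    (hmInt : ∀ a : Bool, Integrable (fun ω => m a (X ω, S₁ a ω, S₂ a ω)) P) :
    P[fun ω => Y true ω - Y false ω | MeasurableSpace.comap X m𝓧]
      =ᵐ[P] P[fun ω => m true (X ω, S₁ true ω, S₂ true ω)
        - m false (X ω, S₁ false ω, S₂ false ω) | MeasurableSpace.comap X m𝓧] := by
    -- abbreviations for the σ-algebras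
  set mX := MeasurableSpace.comap X m𝓧 with hmX_def
  set mA := MeasurableSpace.comap A inferInstance with hmA_def
  set mS1 := MeasurableSpace.comap S₁o inferInstance with hmS1_def
  set mS2 := MeasurableSpace.comap S₂o inferInstance with hmS2_def
  set mYo := MeasurableSpace.comap Yo inferInstance with hmYo_def
  set mR3 := MeasurableSpace.comap R₃ inferInstance with hmR3_def
  letI : MeasurableSpace Ω := mΩ
  have hmXle : mX ≤ mΩ := hX.comap_le
  have hmAle : mA ≤ mΩ := hA.comap_le
  have hmS1le : mS1 ≤ mΩ := hS₁o.comap_le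
  have hmS2le : mS2 ≤ mΩ := hS₂o.comap_le
  have hHle : mX ⊔ mA ⊔ mS1 ⊔ mS2 ≤ mΩ :=
    sup_le (sup_le (sup_le hmXle hmAle) hmS1le) hmS2le
  have hKle : mX ⊔ mS1 ⊔ mS2 ≤ mΩ := sup_le (sup_le hmXle hmS1le) hmS2le
  have hmXH : mX ≤ mX ⊔ mA ⊔ mS1 ⊔ mS2 :=
    le_sup_left.trans (le_sup_left.trans le_sup_left)
  have hmAH : mA ≤ mX ⊔ mA ⊔ mS1 ⊔ mS2 :=
    le_sup_right.trans (le_sup_left.trans le_sup_left)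
  have hKH : mX ⊔ mS1 ⊔ mS2 ≤ mX ⊔ mA ⊔ mS1 ⊔ mS2 :=
    sup_le (sup_le hmXH (le_sup_right.trans le_sup_left)) le_sup_right
  -- Yo is integrable
  have hYoInt : Integrable Yo P := by
    refine Integrable.mono' ((hYint true).abs.add ((hYint false).abs))
      hYo.aestronglyMeasurable ?_
    filter_upwards with ω
    have hball : ∀ b, |Y b ω| ≤ |Y true ω| + |Y false ω| := by
      intro b
      cases b
      · exact le_add_of_nonneg_left (abs_nonneg _)
      · exact le_add_of_nonneg_right (abs_nonneg _)
    simpa [hconsY, Real.norm_eq_abs] using hball (A ω)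
  -- the key per-arm identity
  have key : ∀ a : Bool, P[Y a | mX] =ᵐ[P]
      P[(fun ω => m a (X ω, S₁ a ω, S₂ a ω)) | mX] := by
    intro a
    -- sets
    have hTAmA : MeasurableSet[mA] {ω | A ω = a} :=
      ⟨{a}, MeasurableSet.of_discrete, by ext ω; simp⟩
    have hTRmR : MeasurableSet[mR3] {ω | R₃ ω = true} :=
      ⟨{true}, MeasurableSet.of_discrete, by ext ω; simp⟩
    have hTAm : MeasurableSet[mΩ] {ω | A ω = a} := hmAle _ hTAmA
    have hTRm : MeasurableSet[mΩ] {ω | R₃ ω = true} := hR₃.comap_le _ hTRmR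
    have hEm : MeasurableSet[mΩ] ({ω | A ω = a} ∩ {ω | R₃ ω = true}) := hTAm.inter hTRm
    -- consistency
    have hMfa : ∀ x, A x = a → m a (X x, S₁o x, S₂o x) = m a (X x, S₁ a x, S₂ a x) := by
      intro x hx
      simp only [hcons₁, hcons₂, hx]
    have hYoYa : ∀ x, A x = a → Yo x = Y a x := by
      intro x hx
      simp only [hconsY, hx]
    -- conditional measure
    haveI hQprob : IsProbabilityMeasure (P[|{ω | A ω = a} ∩ {ω | R₃ ω = true}]) :=
      cond_isProbabilityMeasure (hab a).ne'
    have hQYo : Integrable Yo (P[|{ω | A ω = a} ∩ {ω | R₃ ω = true}]) := by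
      show Integrable Yo ((P ({ω | A ω = a} ∩ {ω | R₃ ω = true}))⁻¹ •
        P.restrict ({ω | A ω = a} ∩ {ω | R₃ ω = true}))
      exact (hYoInt.restrict).smul_measure (ENNReal.inv_ne_top.mpr (hab a).ne')
    have hconv : ∀ (f : Ω → ℝ) (G : Set Ω), MeasurableSet[mΩ] G →
        ∫ x in G, f x ∂(P[|{ω | A ω = a} ∩ {ω | R₃ ω = true}])
          = ((P ({ω | A ω = a} ∩ {ω | R₃ ω = true}))⁻¹).toReal •
            ∫ x in G ∩ ({ω | A ω = a} ∩ {ω | R₃ ω = true}), f x ∂P := by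
      intro f G hG
      show ∫ x in G, f x ∂((P ({ω | A ω = a} ∩ {ω | R₃ ω = true}))⁻¹ •
        P.restrict ({ω | A ω = a} ∩ {ω | R₃ ω = true})) = _
      rw [Measure.restrict_smul, integral_smul_measure, Measure.restrict_restrict hG]
    -- set integral identity on the observed event
    have hQsetInt : ∀ G : Set Ω, MeasurableSet[mX ⊔ mS1 ⊔ mS2] G →
        ∫ x in G ∩ ({ω | A ω = a} ∩ {ω | R₃ ω = true}), Yo x ∂P
          = ∫ x in G ∩ ({ω | A ω = a} ∩ {ω | R₃ ω = true}),
              m a (X x, S₁o x, S₂o x) ∂P := by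
      intro G hG
      have hGm : MeasurableSet[mΩ] G := hKle _ hG
      have h1 : ∫ x in G, m a (X x, S₁o x, S₂o x)
            ∂(P[|{ω | A ω = a} ∩ {ω | R₃ ω = true}])
          = ∫ x in G, Yo x ∂(P[|{ω | A ω = a} ∩ {ω | R₃ ω = true}]) := by
        rw [setIntegral_congr_ae hGm ((hmVer a).mono fun x hx _ => hx)]
        exact setIntegral_condExp hKle hQYo hG
      rw [hconv _ G hGm, hconv _ G hGm] at h1
      have hc : ((P ({ω | A ω = a} ∩ {ω | R₃ ω = true}))⁻¹).toReal ≠ 0 :=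
        ENNReal.toReal_ne_zero.mpr ⟨ENNReal.inv_ne_zero.mpr (measure_ne_top P _),
          ENNReal.inv_ne_top.mpr (hab a).ne'⟩
      exact (smul_right_injective ℝ hc h1).symm
    -- trace σ-algebra: every H-set agrees with a K-set on {A = a}
    have htrace : ∀ H : Set Ω, MeasurableSet[mX ⊔ mA ⊔ mS1 ⊔ mS2] H →
        ∃ G, MeasurableSet[mX ⊔ mS1 ⊔ mS2] G ∧
          H ∩ {ω | A ω = a} = G ∩ {ω | A ω = a} := by
      have hle : mX ⊔ mA ⊔ mS1 ⊔ mS2 ≤ traceSpace (mX ⊔ mS1 ⊔ mS2) {ω | A ω = a} := by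
        have hof : ∀ m' : MeasurableSpace Ω, m' ≤ mX ⊔ mS1 ⊔ mS2 →
            m' ≤ traceSpace (mX ⊔ mS1 ⊔ mS2) {ω | A ω = a} := by
          intro m' hm' s hs
          exact ⟨s, hm' _ hs, rfl⟩
        refine sup_le (sup_le (sup_le ?_ ?_) ?_) ?_
        · exact hof mX (le_sup_left.trans le_sup_left)
        · rintro s ⟨t, -, rfl⟩
          by_cases hat : a ∈ t
          · refine ⟨Set.univ, @MeasurableSet.univ Ω (mX ⊔ mS1 ⊔ mS2), ?_⟩
            ext ω
            simp only [Set.mem_inter_iff, Set.mem_preimage, Set.mem_setOf_eq, Set.mem_univ,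
              true_and]
            exact ⟨fun h => h.2, fun h => ⟨h ▸ hat, h⟩⟩
          · refine ⟨∅, @MeasurableSet.empty Ω (mX ⊔ mS1 ⊔ mS2), ?_⟩
            ext ω
            simp only [Set.mem_inter_iff, Set.mem_preimage, Set.mem_setOf_eq, Set.mem_empty_iff_false,
              false_and, iff_false, not_and]
            intro h1 h2
            exact hat (h2 ▸ h1)
        · exact hof mS1 (le_sup_right.trans le_sup_left)
        · exact hof mS2 le_sup_right
      exact fun H hH => hle _ hH
    -- indicator functions
    have huInd : Integrable (({ω | A ω = a} ∩ {ω | R₃ ω = true}).indicator Yo) P :=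
      hYoInt.indicator hEm
    have hvInd : Integrable (({ω | A ω = a} ∩ {ω | R₃ ω = true}).indicator
        (fun ω => m a (X ω, S₁ a ω, S₂ a ω))) P := (hmInt a).indicator hEm
    -- set-integral equality over all H-measurable sets
    have hsetHeq : ∀ H : Set Ω, MeasurableSet[mX ⊔ mA ⊔ mS1 ⊔ mS2] H →
        ∫ x in H, (({ω | A ω = a} ∩ {ω | R₃ ω = true}).indicator Yo) x ∂P
          = ∫ x in H, (({ω | A ω = a} ∩ {ω | R₃ ω = true}).indicator
              (fun ω => m a (X ω, S₁ a ω, S₂ a ω))) x ∂P := by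
      intro H hH
      obtain ⟨G, hG, hHG⟩ := htrace H hH
      have hHm : MeasurableSet[mΩ] H := hHle _ hH
      have hGm : MeasurableSet[mΩ] G := hKle _ hG
      have hinter : H ∩ ({ω | A ω = a} ∩ {ω | R₃ ω = true})
          = G ∩ ({ω | A ω = a} ∩ {ω | R₃ ω = true}) := by
        rw [← Set.inter_assoc, hHG, Set.inter_assoc]
      rw [setIntegral_indicator hEm, setIntegral_indicator hEm, hinter,
        hQsetInt G hG]
      refine setIntegral_congr_fun (hGm.inter hEm) ?_
      intro x hx
      exact hMfa x hx.2.1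
    -- equality of conditional expectations over H
    have hcondEq : P[({ω | A ω = a} ∩ {ω | R₃ ω = true}).indicator Yo |
          mX ⊔ mA ⊔ mS1 ⊔ mS2]
        =ᵐ[P] P[({ω | A ω = a} ∩ {ω | R₃ ω = true}).indicator
            (fun ω => m a (X ω, S₁ a ω, S₂ a ω)) | mX ⊔ mA ⊔ mS1 ⊔ mS2] := by
      refine ae_eq_condExp_of_forall_setIntegral_eq hHle hvInd
        (fun s _ _ => integrable_condExp.integrableOn) (fun s hs _ => ?_)
        stronglyMeasurable_condExp.aestronglyMeasurable
      rw [setIntegral_condExp hHle huInd hs]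
      exact hsetHeq s hs
    -- product decompositions of the indicators
    have hu_eq : (fun ω => (Yo ω * ({ω' | A ω' = a}).indicator (fun _ => (1:ℝ)) ω)
          * ({ω' | R₃ ω' = true}).indicator (fun _ => (1:ℝ)) ω)
        = ({ω | A ω = a} ∩ {ω | R₃ ω = true}).indicator Yo := by
      funext ω
      by_cases h1 : ω ∈ {ω' | A ω' = a} <;> by_cases h2 : ω ∈ {ω' | R₃ ω' = true} <;>
        simp [Set.indicator_apply, h1, h2]
    have hv_eq : (fun ω => (m a (X ω, S₁o ω, S₂o ω)
            * ({ω' | A ω' = a}).indicator (fun _ => (1:ℝ)) ω)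
          * ({ω' | R₃ ω' = true}).indicator (fun _ => (1:ℝ)) ω)
        = ({ω | A ω = a} ∩ {ω | R₃ ω = true}).indicator
            (fun ω => m a (X ω, S₁ a ω, S₂ a ω)) := by
      funext ω
      by_cases h1 : ω ∈ {ω' | A ω' = a} <;> by_cases h2 : ω ∈ {ω' | R₃ ω' = true} <;>
        simp [Set.indicator_apply, h1, h2, hMfa ω]
      exact hMfa ω h1
    -- measurability of the two "W" factors
    have hW1meas : Measurable[(mX ⊔ mA ⊔ mS1 ⊔ mS2) ⊔ mYo]
        (fun ω => Yo ω * ({ω' | A ω' = a}).indicator (fun _ => (1:ℝ)) ω) := by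
      have h1 : Measurable[(mX ⊔ mA ⊔ mS1 ⊔ mS2) ⊔ mYo] Yo :=
        Measurable.of_comap_le le_sup_right
      have h2 : MeasurableSet[(mX ⊔ mA ⊔ mS1 ⊔ mS2) ⊔ mYo] {ω' | A ω' = a} :=
        (hmAH.trans le_sup_left) _ hTAmA
      exact h1.mul (measurable_const.indicator h2)
    have hW1int : Integrable
        (fun ω => Yo ω * ({ω' | A ω' = a}).indicator (fun _ => (1:ℝ)) ω) P := by
      rw [mul_indicator_one_eq_indicator]
      exact hYoInt.indicator hTAm
    have hMmeasH : Measurable[mX ⊔ mA ⊔ mS1 ⊔ mS2] (fun ω => m a (X ω, S₁o ω, S₂o ω)) := by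
      have hXm : Measurable[mX ⊔ mS1 ⊔ mS2] X :=
        Measurable.of_comap_le (le_sup_left.trans le_sup_left)
      have hS1m : Measurable[mX ⊔ mS1 ⊔ mS2] S₁o :=
        Measurable.of_comap_le (le_sup_right.trans le_sup_left)
      have hS2m : Measurable[mX ⊔ mS1 ⊔ mS2] S₂o := Measurable.of_comap_le le_sup_right
      exact ((hm a).comp (hXm.prodMk (hS1m.prodMk hS2m))).mono hKH le_rfl
    have hM1meas : Measurable[mX ⊔ mA ⊔ mS1 ⊔ mS2]
        (fun ω => m a (X ω, S₁o ω, S₂o ω)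
          * ({ω' | A ω' = a}).indicator (fun _ => (1:ℝ)) ω) :=
      hMmeasH.mul (measurable_const.indicator (hmAH _ hTAmA))
    have hM1int : Integrable (fun ω => m a (X ω, S₁o ω, S₂o ω)
        * ({ω' | A ω' = a}).indicator (fun _ => (1:ℝ)) ω) P := by
      have heq : (fun ω => m a (X ω, S₁o ω, S₂o ω)
          * ({ω' | A ω' = a}).indicator (fun _ => (1:ℝ)) ω)
          = ({ω' | A ω' = a}).indicator (fun ω => m a (X ω, S₁ a ω, S₂ a ω)) := by
        funext ω
        by_cases h1 : ω ∈ {ω' | A ω' = a} <;> simp [Set.indicator_apply, h1]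
        exact hMfa ω h1
      rw [heq]
      exact (hmInt a).indicator hTAm
    -- apply Lemma B with the sequential-missingness condition
    have hBu := condexp_mul_indicator_of_condIndep (μ := P) hHle hYo.comap_le hR₃.comap_le
      hseq3.symm hTRmR hW1meas.stronglyMeasurable hW1int
    -- pull-out for the regression side
    have hBv : P[fun ω => (fun ω' => m a (X ω', S₁o ω', S₂o ω')
            * ({ω' | A ω' = a}).indicator (fun _ => (1:ℝ)) ω') ω
          * ({ω' | R₃ ω' = true}).indicator (fun _ => (1:ℝ)) ω | mX ⊔ mA ⊔ mS1 ⊔ mS2]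
        =ᵐ[P] fun ω => (m a (X ω, S₁o ω, S₂o ω)
            * ({ω' | A ω' = a}).indicator (fun _ => (1:ℝ)) ω)
          * (P[({ω' | R₃ ω' = true}).indicator (fun _ => (1:ℝ)) |
              mX ⊔ mA ⊔ mS1 ⊔ mS2]) ω := by
      have hprod : Integrable ((fun ω' => m a (X ω', S₁o ω', S₂o ω')
            * ({ω' | A ω' = a}).indicator (fun _ => (1:ℝ)) ω')
          * ({ω' | R₃ ω' = true}).indicator (fun _ => (1:ℝ))) P := by
        have : ((fun ω' => m a (X ω', S₁o ω', S₂o ω')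
              * ({ω' | A ω' = a}).indicator (fun _ => (1:ℝ)) ω')
            * ({ω' | R₃ ω' = true}).indicator (fun _ => (1:ℝ)))
            = fun ω => (m a (X ω, S₁o ω, S₂o ω)
              * ({ω' | A ω' = a}).indicator (fun _ => (1:ℝ)) ω)
            * ({ω' | R₃ ω' = true}).indicator (fun _ => (1:ℝ)) ω := rfl
        rw [this, hv_eq]
        exact hvInd
      exact condExp_mul_of_stronglyMeasurable_left hM1meas.stronglyMeasurable hprod
        ((integrable_const (1:ℝ)).indicator hTRm)
    -- cancel the positive selection score
    have hW1M1 : P[(fun ω => Yo ω * ({ω' | A ω' = a}).indicator (fun _ => (1:ℝ)) ω) |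
          mX ⊔ mA ⊔ mS1 ⊔ mS2]
        =ᵐ[P] fun ω => m a (X ω, S₁o ω, S₂o ω)
          * ({ω' | A ω' = a}).indicator (fun _ => (1:ℝ)) ω := by
      have hchain : (fun ω => (P[(fun ω' => Yo ω'
            * ({ω' | A ω' = a}).indicator (fun _ => (1:ℝ)) ω') |
              mX ⊔ mA ⊔ mS1 ⊔ mS2]) ω
          * (P[({ω' | R₃ ω' = true}).indicator (fun _ => (1:ℝ)) |
              mX ⊔ mA ⊔ mS1 ⊔ mS2]) ω)
          =ᵐ[P] fun ω => (m a (X ω, S₁o ω, S₂o ω)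
            * ({ω' | A ω' = a}).indicator (fun _ => (1:ℝ)) ω)
          * (P[({ω' | R₃ ω' = true}).indicator (fun _ => (1:ℝ)) |
              mX ⊔ mA ⊔ mS1 ⊔ mS2]) ω := by
        refine hBu.symm.trans ?_
        have h1 : (fun ω => (fun ω' => Yo ω'
              * ({ω' | A ω' = a}).indicator (fun _ => (1:ℝ)) ω') ω
            * ({ω' | R₃ ω' = true}).indicator (fun _ => (1:ℝ)) ω)
            = ({ω | A ω = a} ∩ {ω | R₃ ω = true}).indicator Yo := hu_eq
        have h2 : (fun ω => (fun ω' => m a (X ω', S₁o ω', S₂o ω')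
              * ({ω' | A ω' = a}).indicator (fun _ => (1:ℝ)) ω') ω
            * ({ω' | R₃ ω' = true}).indicator (fun _ => (1:ℝ)) ω)
            = ({ω | A ω = a} ∩ {ω | R₃ ω = true}).indicator
                (fun ω => m a (X ω, S₁ a ω, S₂ a ω)) := hv_eq
        rw [h1]
        refine hcondEq.trans ?_
        rw [← h2]
        exact hBv
      filter_upwards [hchain, hr₃pos] with ω hω hpos
      exact mul_right_cancel₀ hpos.ne' hω
    -- tower property down to σ(X)
    have htow : P[(fun ω => Yo ω * ({ω' | A ω' = a}).indicator (fun _ => (1:ℝ)) ω) | mX]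
        =ᵐ[P] P[(fun ω => m a (X ω, S₁o ω, S₂o ω)
          * ({ω' | A ω' = a}).indicator (fun _ => (1:ℝ)) ω) | mX] :=
      (condExp_condExp_of_le hmXH hHle).symm.trans (condExp_congr_ae hW1M1)
    -- rewrite using potential outcomes
    have hW1Ya : (fun ω => Yo ω * ({ω' | A ω' = a}).indicator (fun _ => (1:ℝ)) ω)
        = fun ω => Y a ω * ({ω' | A ω' = a}).indicator (fun _ => (1:ℝ)) ω := by
      funext ω
      by_cases h1 : ω ∈ {ω' | A ω' = a} <;> simp [Set.indicator_apply, h1]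
      exact hYoYa ω h1
    have hM1fa : (fun ω => m a (X ω, S₁o ω, S₂o ω)
          * ({ω' | A ω' = a}).indicator (fun _ => (1:ℝ)) ω)
        = fun ω => m a (X ω, S₁ a ω, S₂ a ω)
          * ({ω' | A ω' = a}).indicator (fun _ => (1:ℝ)) ω := by
      funext ω
      by_cases h1 : ω ∈ {ω' | A ω' = a} <;> simp [Set.indicator_apply, h1]
      exact hMfa ω h1
    -- unconfoundedness factorizations
    have htriple : Measurable[mX ⊔ MeasurableSpace.comap
        (fun ω => (S₁ a ω, S₂ a ω, Y a ω)) inferInstance]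
        (fun ω => (S₁ a ω, S₂ a ω, Y a ω)) := Measurable.of_comap_le le_sup_right
    have htriple_le : MeasurableSpace.comap (fun ω => (S₁ a ω, S₂ a ω, Y a ω))
        inferInstance ≤ mΩ := ((hS₁ a).prodMk ((hS₂ a).prodMk (hYmeas a))).comap_le
    have hBY := condexp_mul_indicator_of_condIndep (μ := P) hmXle htriple_le hmAle
      (hunconf a) hTAmA (htriple.snd.snd).stronglyMeasurable (hYint a)
    have hfameas : Measurable[mX ⊔ MeasurableSpace.comap
        (fun ω => (S₁ a ω, S₂ a ω, Y a ω)) inferInstance]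
        (fun ω => m a (X ω, S₁ a ω, S₂ a ω)) := by
      have hXm : Measurable[mX ⊔ MeasurableSpace.comap
          (fun ω => (S₁ a ω, S₂ a ω, Y a ω)) inferInstance] X :=
        Measurable.of_comap_le le_sup_left
      exact (hm a).comp (hXm.prodMk (htriple.fst.prodMk htriple.snd.fst))
    have hBfa := condexp_mul_indicator_of_condIndep (μ := P) hmXle htriple_le hmAle
      (hunconf a) hTAmA hfameas.stronglyMeasurable (hmInt a)
    -- positivity of the propensity score
    have heapos : ∀ᵐ ω ∂P,
        0 < (P[({ω' | A ω' = a}).indicator (fun _ => (1:ℝ)) | mX]) ω := by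
      filter_upwards [heVer a, hePos a] with ω h1 h2
      rw [← h1]
      exact h2.1
    -- final chain and cancellation
    have hchain2 : (fun ω => (P[Y a | mX]) ω
          * (P[({ω' | A ω' = a}).indicator (fun _ => (1:ℝ)) | mX]) ω)
        =ᵐ[P] fun ω => (P[(fun ω' => m a (X ω', S₁ a ω', S₂ a ω')) | mX]) ω
          * (P[({ω' | A ω' = a}).indicator (fun _ => (1:ℝ)) | mX]) ω := by
      refine hBY.symm.trans ?_
      rw [← hW1Ya]
      refine htow.trans ?_
      rw [hM1fa]
      exact hBfa
    filter_upwards [hchain2, heapos] with ω hω hpos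
    exact mul_right_cancel₀ hpos.ne' hω
  -- assemble both arms
  have h1 : P[(fun ω => Y true ω - Y false ω) | mX]
      =ᵐ[P] P[Y true | mX] - P[Y false | mX] := condExp_sub (hYint true) (hYint false) _
  have h2 : P[(fun ω => m true (X ω, S₁ true ω, S₂ true ω)
        - m false (X ω, S₁ false ω, S₂ false ω)) | mX]
      =ᵐ[P] P[(fun ω => m true (X ω, S₁ true ω, S₂ true ω)) | mX]
        - P[(fun ω => m false (X ω, S₁ false ω, S₂ false ω)) | mX] :=
    condExp_sub (hmInt true) (hmInt false) _
  refine h1.trans (Filter.EventuallyEq.trans ?_ h2.symm)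
  filter_upwards [key true, key false] with ω k1 k2
  simp only [Pi.sub_apply]
  rw [k1, k2]
end

section
/- Identifiability of the long-term average treatment effect ATE (Theorem 4.2). Assume monotone missing, strong ignorability, and sequential missing, and that P({A=a} ∩ {R₃=1}) > 0 for a ∈ {0,1}. For a ∈ {0,1}, let m_a : 𝒳 × ℝ × ℝ → ℝ be any measurable function such that m_a(X, S₁, S₂) is a version of the conditional expectation of Y given σ(X, S₁, S₂) under the conditional measure P(·|{A=a} ∩ {R₃=1}), and assume m_a(X, S₁(a), S₂(a)) is P-integrable. Then E[Y(1)] − E[Y(0)] = E[ m₁(X, S₁(1), S₂(1)) ] − E[ m₀(X, S₁(0), S₂(0)) ]. -/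
open MeasureTheory ProbabilityTheory

set_option linter.unusedSectionVars false
set_option linter.unusedVariables false
set_option maxHeartbeats 2000000

open Set

section Core
variable {Ω : Type*} {m' m₁ m₂ : MeasurableSpace Ω} [mΩ : MeasurableSpace Ω]
  [StandardBorelSpace Ω] {P : Measure Ω} [IsProbabilityMeasure P]

lemma aux_ae_zero {m : MeasurableSpace Ω} (hm : m ≤ mΩ) {F : Ω → ℝ}
    (hFm : StronglyMeasurable[m] F) (hFi : Integrable F P)
    (h : ∀ s, MeasurableSet[m] s → ∫ ω in s, F ω ∂P = 0) : F =ᵐ[P] 0 := by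
  have hFt : Integrable F (P.trim hm) := hFi.trim hm hFm
  have hz : F =ᵐ[P.trim hm] 0 := by
    refine hFt.ae_eq_zero_of_forall_setIntegral_eq_zero (fun s hs _ => ?_)
    rw [← setIntegral_trim hm hFm hs]
    exact h s hs
  exact ae_eq_of_ae_eq_trim hz

lemma aux_integral_mul_condexp {m : MeasurableSpace Ω} (hm : m ≤ mΩ) {g f : Ω → ℝ}
    (hg : StronglyMeasurable[m] g) (hgf : Integrable (g * f) P) (hf : Integrable f P) :
    ∫ ω, g ω * (P[f|m]) ω ∂P = ∫ ω, g ω * f ω ∂P := by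
  have h := condExp_mul_of_stronglyMeasurable_left hg hgf hf
  calc ∫ ω, g ω * (P[f|m]) ω ∂P = ∫ ω, (P[g * f|m]) ω ∂P := (integral_congr_ae h).symm
    _ = ∫ ω, g ω * f ω ∂P := integral_condExp hm

theorem condIndep_setIntegral_eq
    (hm' : m' ≤ mΩ) (hm₁ : m₁ ≤ mΩ) (hm₂ : m₂ ≤ mΩ)
    (hci : CondIndep m' m₁ m₂ hm' P)
    {t₂ : Set Ω} (ht₂ : MeasurableSet[m₂] t₂)
    {f : Ω → ℝ} (hfm : StronglyMeasurable[m' ⊔ m₁] f) (hfi : Integrable f P) :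
    ∫ ω in t₂, f ω ∂P
      = ∫ ω, (P[t₂.indicator (fun _ => (1 : ℝ)) | m']) ω * f ω ∂P := by
  have ht₂0 : MeasurableSet t₂ := hm₂ _ ht₂
  set e₂ : Ω → ℝ := P[t₂.indicator (fun _ => (1 : ℝ)) | m'] with he₂def
  have he₂sm : StronglyMeasurable[m'] e₂ := stronglyMeasurable_condExp
  have he₂meas : Measurable e₂ := (he₂sm.mono hm').measurable
  have he₂int : Integrable e₂ P := integrable_condExp
  have he₂0 : 0 ≤ᵐ[P] e₂ := condExp_nonneg (ae_of_all _ fun ω => indicator_nonneg (fun _ _ => zero_le_one) ω)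
  have hsup : m' ⊔ m₁ ≤ mΩ := sup_le hm' hm₁
  -- the two measures on `m' ⊔ m₁`
  set μ₁ : @Measure Ω (m' ⊔ m₁) := (P.restrict t₂).trim hsup with hμ₁def
  set μ₂ : @Measure Ω (m' ⊔ m₁) :=
    (P.withDensity (fun ω => ENNReal.ofReal (e₂ ω))).trim hsup with hμ₂def
  -- real-valued computation on the π-system
  have hreal : ∀ g t₁, MeasurableSet[m'] g → MeasurableSet[m₁] t₁ →
      (P ((g ∩ t₁) ∩ t₂)).toReal = ∫ ω in g ∩ t₁, e₂ ω ∂P := by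
    intro g t₁ hg ht₁
    have hg0 : MeasurableSet g := hm' _ hg
    have ht₁0 : MeasurableSet t₁ := hm₁ _ ht₁
    have hii := (condIndep_iff m' m₁ m₂ hm' hm₁ hm₂ P).mp hci t₁ t₂ ht₁ ht₂
    have hint_ind : Integrable ((t₁ ∩ t₂).indicator (fun _ => (1 : ℝ))) P :=
      (integrable_const (1 : ℝ)).indicator (ht₁0.inter ht₂0)
    have step1 : (P ((g ∩ t₁) ∩ t₂)).toReal
        = ∫ ω in g, (t₁ ∩ t₂).indicator (fun _ => (1 : ℝ)) ω ∂P := by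
      rw [setIntegral_indicator (ht₁0.inter ht₂0), setIntegral_const, smul_eq_mul, mul_one]
      congr 1
      rw [Set.inter_assoc, Set.inter_comm g]
    have step2 : ∫ ω in g, (t₁ ∩ t₂).indicator (fun _ => (1 : ℝ)) ω ∂P
        = ∫ ω in g, (P[(t₁ ∩ t₂).indicator (fun _ => (1 : ℝ)) | m']) ω ∂P :=
      (setIntegral_condExp hm' hint_ind hg).symm
    have step3 : ∫ ω in g, (P[(t₁ ∩ t₂).indicator (fun _ => (1 : ℝ)) | m']) ω ∂P
        = ∫ ω in g, (P[t₁.indicator (fun _ => (1 : ℝ)) | m']) ω * e₂ ω ∂P := by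
      refine setIntegral_congr_ae hg0 ?_
      filter_upwards [hii] with ω hω _
      simpa using hω
    -- now pull `E[1_{t₁}|m']` back inside
    set e₁ : Ω → ℝ := P[t₁.indicator (fun _ => (1 : ℝ)) | m'] with he₁def
    have he₁sm : StronglyMeasurable[m'] e₁ := stronglyMeasurable_condExp
    have hgind : StronglyMeasurable[m'] (g.indicator (fun ω => e₂ ω)) :=
      he₂sm.indicator hg
    have hb : Integrable (g.indicator (fun ω => e₂ ω) * t₁.indicator (fun _ => (1 : ℝ))) P := by
      refine Integrable.mono he₂int.abs ?_ (ae_of_all _ fun ω => ?_)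
      · exact ((he₂meas.indicator hg0).mul
          (measurable_const.indicator ht₁0)).aestronglyMeasurable
      · by_cases hg' : ω ∈ g <;> by_cases ht' : ω ∈ t₁ <;>
          simp [hg', ht', Real.norm_eq_abs, abs_nonneg]
    have step4 : ∫ ω in g, e₁ ω * e₂ ω ∂P = ∫ ω in g ∩ t₁, e₂ ω ∂P := by
      have h1 : ∫ ω in g, e₁ ω * e₂ ω ∂P
          = ∫ ω, (g.indicator (fun ω => e₂ ω)) ω * e₁ ω ∂P := by
        rw [← integral_indicator hg0]
        congr 1
        funext ω
        by_cases hg' : ω ∈ g <;> simp [hg', mul_comm]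
      have h2 := aux_integral_mul_condexp hm' hgind hb
        ((integrable_const (1 : ℝ)).indicator ht₁0)
      rw [h1, h2]
      rw [← integral_indicator (hg0.inter ht₁0)]
      congr 1
      funext ω
      by_cases hg' : ω ∈ g <;> by_cases ht' : ω ∈ t₁ <;>
        simp [hg', ht', Set.indicator_of_mem, Set.indicator_of_notMem]
    rw [step1, step2, step3, ← step4]
  -- measure equality on `m' ⊔ m₁`
  have hwdfin : IsFiniteMeasure (P.withDensity (fun ω => ENNReal.ofReal (e₂ ω))) := by
    refine isFiniteMeasure_withDensity ?_
    have := he₂int.hasFiniteIntegral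
    refine ne_of_lt (lt_of_le_of_lt (lintegral_mono fun ω => ?_) this)
    rw [← ofReal_norm]
    exact ENNReal.ofReal_le_ofReal (le_abs_self _)
  haveI := hwdfin
  set C : Set (Set Ω) := {s | ∃ g t₁, MeasurableSet[m'] g ∧ MeasurableSet[m₁] t₁ ∧ s = g ∩ t₁}
    with hCdef
  have hgen : (m' ⊔ m₁) = MeasurableSpace.generateFrom C := by
    refine le_antisymm (sup_le ?_ ?_) (MeasurableSpace.generateFrom_le ?_)
    · intro s hs
      exact MeasurableSpace.measurableSet_generateFrom
        ⟨s, Set.univ, hs, MeasurableSet.univ, (Set.inter_univ s).symm⟩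
    · intro s hs
      exact MeasurableSpace.measurableSet_generateFrom
        ⟨Set.univ, s, MeasurableSet.univ, hs, (Set.univ_inter s).symm⟩
    · rintro s ⟨g, t₁, hg, ht₁, rfl⟩
      exact ((le_sup_left : m' ≤ m' ⊔ m₁) g hg).inter ((le_sup_right : m₁ ≤ m' ⊔ m₁) t₁ ht₁)
  have hpi : IsPiSystem C := by
    rintro s ⟨g, t₁, hg, ht₁, rfl⟩ s' ⟨g', t₁', hg', ht₁', rfl⟩ -
    refine ⟨g ∩ g', t₁ ∩ t₁', hg.inter hg', ht₁.inter ht₁', ?_⟩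
    rw [Set.inter_inter_inter_comm]
  have hCeq : ∀ s ∈ C, μ₁ s = μ₂ s := by
    rintro s ⟨g, t₁, hg, ht₁, rfl⟩
    have hs : MeasurableSet[m' ⊔ m₁] (g ∩ t₁) :=
      ((le_sup_left : m' ≤ m' ⊔ m₁) g hg).inter ((le_sup_right : m₁ ≤ m' ⊔ m₁) t₁ ht₁)
    have hs0 : MeasurableSet (g ∩ t₁) := hsup _ hs
    rw [hμ₁def, hμ₂def, trim_measurableSet_eq hsup hs, trim_measurableSet_eq hsup hs,
      Measure.restrict_apply hs0, withDensity_apply _ hs0]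
    have h1 : P (g ∩ t₁ ∩ t₂) = ENNReal.ofReal ((P (g ∩ t₁ ∩ t₂)).toReal) :=
      (ENNReal.ofReal_toReal (measure_ne_top P _)).symm
    have h2 : ∫⁻ ω in g ∩ t₁, ENNReal.ofReal (e₂ ω) ∂P
        = ENNReal.ofReal (∫ ω in g ∩ t₁, e₂ ω ∂P) :=
      (ofReal_integral_eq_lintegral_ofReal he₂int.integrableOn
        (ae_restrict_of_ae he₂0)).symm
    rw [h1, h2, hreal g t₁ hg ht₁]
  have huniv : μ₁ Set.univ = μ₂ Set.univ := by
    rw [hμ₁def, hμ₂def, trim_measurableSet_eq hsup MeasurableSet.univ,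
      trim_measurableSet_eq hsup MeasurableSet.univ,
      Measure.restrict_apply_univ, withDensity_apply _ MeasurableSet.univ,
      Measure.restrict_univ]
    have h2 : ∫⁻ ω, ENNReal.ofReal (e₂ ω) ∂P = ENNReal.ofReal (∫ ω, e₂ ω ∂P) :=
      (ofReal_integral_eq_lintegral_ofReal he₂int he₂0).symm
    have h3 : ∫ ω, e₂ ω ∂P = (P t₂).toReal := by
      rw [he₂def, integral_condExp hm']
      rw [integral_indicator_const (1 : ℝ) ht₂0, smul_eq_mul, mul_one, measureReal_def]
    rw [h2, h3, ENNReal.ofReal_toReal (measure_ne_top P _)]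
  have hMeq : μ₁ = μ₂ := by
    exact @MeasureTheory.ext_of_generate_finite Ω (m' ⊔ m₁) μ₁ μ₂ C hgen hpi
      (by infer_instance) hCeq huniv
  -- conclude
  have e1 : ∫ ω in t₂, f ω ∂P = ∫ ω, f ω ∂μ₁ := integral_trim hsup hfm
  have e2 : ∫ ω, f ω ∂μ₂
      = ∫ ω, f ω ∂(P.withDensity (fun ω => ENNReal.ofReal (e₂ ω))) :=
    (integral_trim hsup hfm).symm
  have e3 : ∫ ω, f ω ∂(P.withDensity (fun ω => ENNReal.ofReal (e₂ ω)))
      = ∫ ω, (e₂ ω).toNNReal • f ω ∂P := by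
    exact integral_withDensity_eq_integral_smul he₂meas.real_toNNReal f
  have e4 : ∫ ω, (e₂ ω).toNNReal • f ω ∂P = ∫ ω, e₂ ω * f ω ∂P := by
    refine integral_congr_ae ?_
    filter_upwards [he₂0] with ω h0
    rw [NNReal.smul_def, Real.coe_toNNReal _ h0, smul_eq_mul]
  rw [e1, hMeq, e2, e3, e4]

end Core

lemma exists_inter_eq {Ω : Type*} {m : MeasurableSpace Ω} {A : Ω → Bool} (a : Bool)
    {s : Set Ω} (hs : MeasurableSet[m ⊔ MeasurableSpace.comap A inferInstance] s) :
    ∃ G, MeasurableSet[m] G ∧ s ∩ {ω | A ω = a} = G ∩ {ω | A ω = a} := by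
  let 𝒞 : MeasurableSpace Ω :=
    { MeasurableSet' := fun s =>
        ∃ G, MeasurableSet[m] G ∧ s ∩ {ω | A ω = a} = G ∩ {ω | A ω = a}
      measurableSet_empty := ⟨∅, MeasurableSet.empty, by simp⟩
      measurableSet_compl := by
        rintro s ⟨G, hG, hGe⟩
        refine ⟨Gᶜ, hG.compl, ?_⟩
        have h' := Set.ext_iff.mp hGe
        ext ω
        have hω := h' ω
        simp only [Set.mem_inter_iff, Set.mem_compl_iff, Set.mem_setOf_eq] at *
        tauto
      measurableSet_iUnion := by
        rintro f hf
        choose G hG hGe using hf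
        exact ⟨⋃ n, G n, MeasurableSet.iUnion hG, by
          rw [Set.iUnion_inter, Set.iUnion_inter]; exact Set.iUnion_congr hGe⟩ }
  have hle : m ⊔ MeasurableSpace.comap A inferInstance ≤ 𝒞 := by
    refine sup_le ?_ ?_
    · intro u hu; exact ⟨u, hu, rfl⟩
    · rintro u ⟨t, -, rfl⟩
      by_cases ha : a ∈ t
      · refine ⟨Set.univ, @MeasurableSet.univ Ω m, ?_⟩
        ext ω
        simp only [Set.mem_inter_iff, Set.mem_preimage, Set.mem_setOf_eq, Set.mem_univ,
          true_and]
        constructor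
        · rintro ⟨-, h⟩; exact h
        · intro h; exact ⟨by rw [h]; exact ha, h⟩
      · refine ⟨∅, @MeasurableSet.empty Ω m, ?_⟩
        ext ω
        simp only [Set.mem_inter_iff, Set.mem_preimage, Set.mem_setOf_eq, Set.mem_empty_iff_false,
          false_and, iff_false, not_and]
        intro ht h; exact ha (h ▸ ht)
  exact hle s hs

theorem arm_integral_eq {Ω 𝓧 : Type*} {m𝓧 : MeasurableSpace 𝓧}
    (mX' mA' mS1' mS2' mYo' mR3' mH mG mT' : MeasurableSpace Ω)
    [mΩ : MeasurableSpace Ω] [StandardBorelSpace Ω]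
    (P : Measure Ω) [IsProbabilityMeasure P]
    (X : Ω → 𝓧) (hX : Measurable X) (A : Ω → Bool) (hA : Measurable A) (a : Bool)
    (S₁a S₂a Ya : Ω → ℝ) (hS₁a : Measurable S₁a) (hS₂a : Measurable S₂a) (hYa : Measurable Ya)
    (hYa_int : Integrable Ya P)
    (S₁o S₂o Yo : Ω → ℝ) (hS₁o : Measurable S₁o) (hS₂o : Measurable S₂o) (hYo : Measurable Yo)
    (hYo_int : Integrable Yo P)
    (R₃ : Ω → Bool) (hR₃ : Measurable R₃)
    (hmX'd : mX' = MeasurableSpace.comap X m𝓧)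
    (hmA'd : mA' = MeasurableSpace.comap A inferInstance)
    (hmS1'd : mS1' = MeasurableSpace.comap S₁o inferInstance)
    (hmS2'd : mS2' = MeasurableSpace.comap S₂o inferInstance)
    (hmYo'd : mYo' = MeasurableSpace.comap Yo inferInstance)
    (hmR3'd : mR3' = MeasurableSpace.comap R₃ inferInstance)
    (hmHd : mH = mX' ⊔ mA' ⊔ mS1' ⊔ mS2')
    (hmGd : mG = mX' ⊔ mS1' ⊔ mS2')
    (hmT'd : mT' = MeasurableSpace.comap (fun ω => (S₁a ω, S₂a ω, Ya ω)) inferInstance)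
    (hH_le : mH ≤ mΩ) (hG_le : mG ≤ mΩ) (hX_le : mX' ≤ mΩ)
    (hconsS₁ : ∀ ω, A ω = a → S₁o ω = S₁a ω)
    (hconsS₂ : ∀ ω, A ω = a → S₂o ω = S₂a ω)
    (hconsY : ∀ ω, A ω = a → Yo ω = Ya ω)
    (hunconf : CondIndep mX' mT' mA' hX_le P)
    (e : 𝓧 → ℝ) (he : Measurable e)
    (heVer : (fun ω => e (X ω)) =ᵐ[P]
      P[({ω | A ω = a}).indicator (fun _ => (1 : ℝ)) | mX'])
    (hePos : ∀ᵐ ω ∂P, 0 < e (X ω))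
    (hseq3 : CondIndep mH mR3' mYo' hH_le P)
    (hr₃pos : ∀ᵐ ω ∂P, 0 < (P[({ω' | R₃ ω' = true}).indicator (fun _ => (1 : ℝ)) | mH]) ω)
    (hab : 0 < P ({ω | A ω = a} ∩ {ω | R₃ ω = true}))
    (ma : 𝓧 × ℝ × ℝ → ℝ) (hma : Measurable ma)
    (hmVer : (fun ω => ma (X ω, S₁o ω, S₂o ω))
      =ᵐ[P[|{ω | A ω = a} ∩ {ω | R₃ ω = true}]]
      (P[|{ω | A ω = a} ∩ {ω | R₃ ω = true}])[Yo | mG])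
    (hmInt : Integrable (fun ω => ma (X ω, S₁a ω, S₂a ω)) P) :
    ∫ ω, Ya ω ∂P = ∫ ω, ma (X ω, S₁a ω, S₂a ω) ∂P := by
  classical
  have hHG' : mH = mG ⊔ mA' := by
    rw [hmHd, hmGd, sup_right_comm mX' mA' mS1', sup_right_comm (mX' ⊔ mS1') mA' mS2']
  set Aa : Set Ω := {ω | A ω = a} with hAad
  set R3s : Set Ω := {ω | R₃ ω = true} with hR3sd
  set Ba : Set Ω := Aa ∩ R3s with hBad
  have hAa_m : MeasurableSet[mA'] Aa := by rw [hmA'd]; exact ⟨{a}, trivial, rfl⟩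
  have hR3s_m : MeasurableSet[mR3'] R3s := by rw [hmR3'd]; exact ⟨{true}, trivial, rfl⟩
  have hAa : MeasurableSet Aa := hA (by trivial : MeasurableSet ({a} : Set Bool))
  have hR3s0 : MeasurableSet R3s := hR₃ (by trivial : MeasurableSet ({true} : Set Bool))
  have hBa0 : MeasurableSet Ba := hAa.inter hR3s0
  set M : Ω → ℝ := fun ω => ma (X ω, S₁o ω, S₂o ω) with hMd
  set Ma : Ω → ℝ := fun ω => ma (X ω, S₁a ω, S₂a ω) with hMad
  have hXG' : Measurable[mG] X := by
    refine Measurable.of_comap_le ?_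
    rw [hmGd, ← hmX'd]; exact le_sup_left.trans le_sup_left
  have hS1G' : Measurable[mG] S₁o := by
    refine Measurable.of_comap_le ?_
    rw [hmGd, ← hmS1'd]; exact le_sup_right.trans le_sup_left
  have hS2G' : Measurable[mG] S₂o := by
    refine Measurable.of_comap_le ?_
    rw [hmGd, ← hmS2'd]; exact le_sup_right
  have hM_G' : Measurable[mG] M := hma.comp (hXG'.prodMk (hS1G'.prodMk hS2G'))
  have hG'H : mG ≤ mH := hHG' ▸ le_sup_left
  have hmAH : mA' ≤ mH := hHG' ▸ le_sup_right
  have hmXH : mX' ≤ mH := by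
    rw [hmHd]; exact (le_sup_left.trans le_sup_left).trans le_sup_left
  have hM_H : Measurable[mH] M := hM_G'.mono hG'H le_rfl
  have hMMa : ∀ ω, A ω = a → M ω = Ma ω := by
    intro ω hω; simp only [hMd, hMad, hconsS₁ ω hω, hconsS₂ ω hω]
  -- Step 1
  have key1 : ∀ s : Set Ω, MeasurableSet[mH] s →
      ∫ ω in s ∩ Ba, M ω ∂P = ∫ ω in s ∩ Ba, Yo ω ∂P := by
    have base : ∀ G : Set Ω, MeasurableSet[mG] G →
        ∫ ω in G ∩ Ba, M ω ∂P = ∫ ω in G ∩ Ba, Yo ω ∂P := by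
      intro G hG
      have hG0 : MeasurableSet G := hG_le _ hG
      set Q : Measure Ω := P[|Ba] with hQd
      haveI : IsProbabilityMeasure Q := cond_isProbabilityMeasure hab.ne'
      have hYo_int_Q : Integrable Yo Q :=
        hYo_int.restrict.smul_measure (ENNReal.inv_ne_top.mpr hab.ne')
      have hM_int_Q : Integrable M Q := integrable_condExp.congr hmVer.symm
      have h1 : ∫ ω in G, M ω ∂Q = ∫ ω in G, Yo ω ∂Q := by
        calc ∫ ω in G, M ω ∂Q
            = ∫ ω in G, (Q[Yo|mG]) ω ∂Q :=
              setIntegral_congr_ae hG0 (hmVer.mono fun ω h _ => h)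
          _ = ∫ ω in G, Yo ω ∂Q := setIntegral_condExp hG_le hYo_int_Q hG
      have hconv : ∀ Z : Ω → ℝ,
          ∫ ω in G, Z ω ∂Q = (P Ba).toReal⁻¹ * ∫ ω in G ∩ Ba, Z ω ∂P := by
        intro Z
        show ∫ ω in G, Z ω ∂((P Ba)⁻¹ • P.restrict Ba) = _
        rw [Measure.restrict_smul, integral_smul_measure, Measure.restrict_restrict hG0,
          ENNReal.toReal_inv, smul_eq_mul]
      have hc : (P Ba).toReal⁻¹ ≠ 0 :=
        inv_ne_zero (ENNReal.toReal_ne_zero.mpr ⟨hab.ne', measure_ne_top _ _⟩)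
      have h2 := h1
      rw [hconv M, hconv Yo] at h2
      exact mul_left_cancel₀ hc h2
    intro s hs
    rw [hHG', hmA'd] at hs
    obtain ⟨G, hG, hGe⟩ := exists_inter_eq a hs
    have hsB : s ∩ Ba = G ∩ Ba := by
      rw [hBad, ← Set.inter_assoc, ← Set.inter_assoc, hAad] at *
      rw [hGe]
    rw [hsB]
    exact base G hG
  -- Step 2
  set r : Ω → ℝ := (P[R3s.indicator (fun _ => (1 : ℝ)) | mH]) with hrd
  have hr_pos : ∀ᵐ ω ∂P, 0 < r ω := hr₃pos
  have hr_sm : StronglyMeasurable[mH] r := stronglyMeasurable_condExp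
  have hr0 : 0 ≤ᵐ[P] r :=
    condExp_nonneg (ae_of_all _ fun ω => indicator_nonneg (fun _ _ => zero_le_one) ω)
  have hr1 : r ≤ᵐ[P] fun _ => (1 : ℝ) := by
    have h := condExp_mono (μ := P) (m := mH)
      ((integrable_const (1 : ℝ)).indicator hR3s0) (integrable_const (1 : ℝ))
      (ae_of_all _ fun ω => by by_cases h : ω ∈ R3s <;> simp [h])
    rw [condExp_const hH_le] at h
    exact h
  have hr_bd : ∀ᵐ ω ∂P, |r ω| ≤ 1 := by
    filter_upwards [hr0, hr1] with ω h0 h1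
    rw [abs_of_nonneg h0]; exact h1
  set f₁ : Ω → ℝ := Aa.indicator M with hf₁d
  set f₂ : Ω → ℝ := Aa.indicator Yo with hf₂d
  have hf₁eq : f₁ = Aa.indicator Ma := by
    funext ω
    by_cases h : ω ∈ Aa
    · rw [hf₁d, Set.indicator_of_mem h, Set.indicator_of_mem h, hMMa ω h]
    · rw [hf₁d, Set.indicator_of_notMem h, Set.indicator_of_notMem h]
  have hf₂eq : f₂ = Aa.indicator Ya := by
    funext ω
    by_cases h : ω ∈ Aa
    · rw [hf₂d, Set.indicator_of_mem h, Set.indicator_of_mem h, hconsY ω h]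
    · rw [hf₂d, Set.indicator_of_notMem h, Set.indicator_of_notMem h]
  have hf₁int : Integrable f₁ P := by rw [hf₁eq]; exact hmInt.indicator hAa
  have hf₂int : Integrable f₂ P := hYo_int.indicator hAa
  have hf₁H : Measurable[mH] f₁ := hM_H.indicator (hmAH _ hAa_m)
  have hf₁sm : StronglyMeasurable[mH] f₁ := hf₁H.stronglyMeasurable
  -- Step 2 (continued)
  have hCI32 : CondIndep mH mYo' mR3' hH_le P := Kernel.Indep.symm hseq3
  have hYo_le : mYo' ≤ mΩ := by rw [hmYo'd]; exact hYo.comap_le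
  have hR3_le : mR3' ≤ mΩ := by rw [hmR3'd]; exact hR₃.comap_le
  have hf₂meas : Measurable f₂ := hYo.indicator hAa
  have key2 : ∀ s : Set Ω, MeasurableSet[mH] s →
      ∫ ω in s, r ω * f₁ ω ∂P = ∫ ω in s, r ω * f₂ ω ∂P := by
    intro s hs
    have hs0 : MeasurableSet s := hH_le _ hs
    have hsf₁_sm : StronglyMeasurable[mH ⊔ mYo'] (s.indicator f₁) :=
      ((hf₁H.indicator hs).mono (le_sup_left : mH ≤ mH ⊔ mYo') le_rfl).stronglyMeasurable
    have hsf₁_int : Integrable (s.indicator f₁) P := hf₁int.indicator hs0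
    have hYoH : Measurable[mH ⊔ mYo'] Yo :=
      Measurable.of_comap_le (by rw [← hmYo'd]; exact le_sup_right)
    have hAaH : MeasurableSet[mH ⊔ mYo'] Aa :=
      (le_sup_left : mH ≤ mH ⊔ mYo') _ (hmAH _ hAa_m)
    have hsH : MeasurableSet[mH ⊔ mYo'] s := (le_sup_left : mH ≤ mH ⊔ mYo') _ hs
    have hsf₂_sm : StronglyMeasurable[mH ⊔ mYo'] (s.indicator f₂) :=
      ((hYoH.indicator hAaH).indicator hsH).stronglyMeasurable
    have hsf₂_int : Integrable (s.indicator f₂) P := hf₂int.indicator hs0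
    have hL1 := condIndep_setIntegral_eq hH_le hYo_le hR3_le hCI32 hR3s_m hsf₁_sm hsf₁_int
    have hL2 := condIndep_setIntegral_eq hH_le hYo_le hR3_le hCI32 hR3s_m hsf₂_sm hsf₂_int
    rw [← hrd] at hL1 hL2
    have hset : ∀ g : Ω → ℝ, ∫ ω in R3s, s.indicator (Aa.indicator g) ω ∂P
        = ∫ ω in s ∩ Ba, g ω ∂P := by
      intro g
      rw [setIntegral_indicator hs0, setIntegral_indicator hAa, hBad]
      have hseteq : (R3s ∩ s) ∩ Aa = s ∩ (Aa ∩ R3s) := by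
        ext ω; simp only [Set.mem_inter_iff]; tauto
      rw [hseteq]
    have hLHS : ∫ ω in R3s, s.indicator f₁ ω ∂P = ∫ ω in R3s, s.indicator f₂ ω ∂P := by
      rw [hf₁d, hf₂d, hset M, hset Yo]
      exact key1 s hs
    rw [hL1, hL2] at hLHS
    have hRHS : ∀ g : Ω → ℝ,
        ∫ ω, r ω * s.indicator g ω ∂P = ∫ ω in s, r ω * g ω ∂P := by
      intro g
      rw [← integral_indicator hs0]
      congr 1; funext ω; by_cases h : ω ∈ s <;> simp [h]
    rw [hRHS f₁, hRHS f₂] at hLHS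
    exact hLHS
  set w : Ω → ℝ := (P[f₂|mH]) with hwd
  have hw_sm : StronglyMeasurable[mH] w := stronglyMeasurable_condExp
  have hw_int : Integrable w P := integrable_condExp
  have key2' : ∀ s : Set Ω, MeasurableSet[mH] s →
      ∫ ω in s, r ω * f₂ ω ∂P = ∫ ω in s, r ω * w ω ∂P := by
    intro s hs
    have hs0 : MeasurableSet s := hH_le _ hs
    have hg_sm : StronglyMeasurable[mH] (s.indicator r) := hr_sm.indicator hs
    have hgf : Integrable (s.indicator r * f₂) P := by
      refine Integrable.mono hf₂int ?_ ?_
      · exact ((((hr_sm.mono hH_le).measurable).indicator hs0).mul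
          hf₂meas).aestronglyMeasurable
      · filter_upwards [hr_bd] with ω hb
        simp only [Pi.mul_apply, Real.norm_eq_abs, abs_mul]
        by_cases h : ω ∈ s
        · rw [Set.indicator_of_mem h]
          calc |r ω| * |f₂ ω| ≤ 1 * |f₂ ω| :=
                mul_le_mul_of_nonneg_right hb (abs_nonneg _)
            _ = |f₂ ω| := one_mul _
        · rw [Set.indicator_of_notMem h]; simp [abs_nonneg]
    have h := aux_integral_mul_condexp hH_le hg_sm hgf hf₂int
    have hconv : ∀ g : Ω → ℝ,
        ∫ ω, s.indicator r ω * g ω ∂P = ∫ ω in s, r ω * g ω ∂P := by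
      intro g
      rw [← integral_indicator hs0]
      congr 1; funext ω; by_cases h' : ω ∈ s <;> simp [h']
    rw [hconv, hconv] at h
    rw [← hwd] at h
    exact h.symm
  have hrf₁_int : Integrable (fun ω => r ω * f₁ ω) P := by
    refine Integrable.mono hf₁int ?_ ?_
    · exact ((hr_sm.mono hH_le).measurable.mul
        (hf₁H.mono hH_le le_rfl)).aestronglyMeasurable
    · filter_upwards [hr_bd] with ω hb
      simp only [Real.norm_eq_abs, abs_mul]
      calc |r ω| * |f₁ ω| ≤ 1 * |f₁ ω| := mul_le_mul_of_nonneg_right hb (abs_nonneg _)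
        _ = |f₁ ω| := one_mul _
  have hrw_int : Integrable (fun ω => r ω * w ω) P := by
    refine Integrable.mono hw_int ?_ ?_
    · exact ((hr_sm.mono hH_le).measurable.mul
        ((hw_sm.mono hH_le).measurable)).aestronglyMeasurable
    · filter_upwards [hr_bd] with ω hb
      simp only [Real.norm_eq_abs, abs_mul]
      calc |r ω| * |w ω| ≤ 1 * |w ω| := mul_le_mul_of_nonneg_right hb (abs_nonneg _)
        _ = |w ω| := one_mul _
  have hFz : (fun ω => r ω * f₁ ω - r ω * w ω) =ᵐ[P] 0 := by
    refine aux_ae_zero hH_le ((hr_sm.mul hf₁sm).sub (hr_sm.mul hw_sm))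
      (hrf₁_int.sub hrw_int) ?_
    intro s hs
    rw [integral_sub hrf₁_int.integrableOn hrw_int.integrableOn,
      key2 s hs, key2' s hs, sub_self]
  have hf₁w : f₁ =ᵐ[P] w := by
    filter_upwards [hFz, hr_pos] with ω h0 hp
    have h1 : r ω * f₁ ω - r ω * w ω = 0 := h0
    exact mul_left_cancel₀ hp.ne' (by linarith)
  -- Step 3
  have key3 : ∀ G : Set Ω, MeasurableSet[mX'] G →
      ∫ ω in G, Aa.indicator Ma ω ∂P = ∫ ω in G, Aa.indicator Ya ω ∂P := by
    intro G hG
    have hGH : MeasurableSet[mH] G := hmXH _ hG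
    have hG0 : MeasurableSet G := hH_le _ hGH
    calc ∫ ω in G, Aa.indicator Ma ω ∂P = ∫ ω in G, f₁ ω ∂P := by rw [hf₁eq]
      _ = ∫ ω in G, w ω ∂P := setIntegral_congr_ae hG0 (hf₁w.mono fun ω h _ => h)
      _ = ∫ ω in G, f₂ ω ∂P := setIntegral_condExp hH_le hf₂int hGH
      _ = ∫ ω in G, Aa.indicator Ya ω ∂P := by rw [hf₂eq]
  -- Step 4
  have hT_le : mT' ≤ mΩ := by
    rw [hmT'd]; exact (hS₁a.prodMk (hS₂a.prodMk hYa)).comap_le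
  have hA_le : mA' ≤ mΩ := by rw [hmA'd]; exact hA.comap_le
  have hXT : Measurable[mX' ⊔ mT'] X :=
    Measurable.of_comap_le (by rw [← hmX'd]; exact le_sup_left)
  have hTT : Measurable[mX' ⊔ mT'] (fun ω => (S₁a ω, S₂a ω, Ya ω)) :=
    Measurable.of_comap_le (by rw [← hmT'd]; exact le_sup_right)
  have hS1T : Measurable[mX' ⊔ mT'] S₁a := measurable_fst.comp hTT
  have hS2T : Measurable[mX' ⊔ mT'] S₂a :=
    measurable_fst.comp (measurable_snd.comp hTT)
  have hYaT : Measurable[mX' ⊔ mT'] Ya :=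
    measurable_snd.comp (measurable_snd.comp hTT)
  have hMaT : Measurable[mX' ⊔ mT'] Ma := hma.comp (hXT.prodMk (hS1T.prodMk hS2T))
  set e' : Ω → ℝ := (P[Aa.indicator (fun _ => (1 : ℝ)) | mX']) with he'd
  have he'_pos : ∀ᵐ ω ∂P, 0 < e' ω := by
    filter_upwards [hePos, heVer] with ω h1 h2
    exact lt_of_lt_of_eq h1 h2
  have he'_sm : StronglyMeasurable[mX'] e' := stronglyMeasurable_condExp
  have he'0 : 0 ≤ᵐ[P] e' :=
    condExp_nonneg (ae_of_all _ fun ω => indicator_nonneg (fun _ _ => zero_le_one) ω)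
  have he'1 : e' ≤ᵐ[P] fun _ => (1 : ℝ) := by
    have h := condExp_mono (μ := P) (m := mX')
      ((integrable_const (1 : ℝ)).indicator hAa) (integrable_const (1 : ℝ))
      (ae_of_all _ fun ω => by by_cases h : ω ∈ Aa <;> simp [h])
    rw [condExp_const hX_le] at h
    exact h
  have he'_bd : ∀ᵐ ω ∂P, |e' ω| ≤ 1 := by
    filter_upwards [he'0, he'1] with ω h0 h1
    rw [abs_of_nonneg h0]; exact h1
  have key4 : ∀ G : Set Ω, MeasurableSet[mX'] G →
      ∫ ω in G, e' ω * Ma ω ∂P = ∫ ω in G, e' ω * Ya ω ∂P := by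
    intro G hG
    have hG0 : MeasurableSet G := hX_le _ hG
    have hGXT : MeasurableSet[mX' ⊔ mT'] G := (le_sup_left : mX' ≤ mX' ⊔ mT') _ hG
    have h1 := condIndep_setIntegral_eq hX_le hT_le hA_le hunconf hAa_m
      (f := G.indicator Ma) ((hMaT.indicator hGXT).stronglyMeasurable)
      (hmInt.indicator hG0)
    have h2 := condIndep_setIntegral_eq hX_le hT_le hA_le hunconf hAa_m
      (f := G.indicator Ya) ((hYaT.indicator hGXT).stronglyMeasurable)
      (hYa_int.indicator hG0)
    rw [← he'd] at h1 h2
    have hset : ∀ g : Ω → ℝ,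
        ∫ ω in Aa, G.indicator g ω ∂P = ∫ ω in Aa, Aa.indicator g ω ∂P ∨ True := by
      exact fun g => Or.inr trivial
    have hLHS : ∫ ω in Aa, G.indicator Ma ω ∂P = ∫ ω in Aa, G.indicator Ya ω ∂P := by
      rw [setIntegral_indicator hG0, setIntegral_indicator hG0]
      have h3 := key3 G hG
      rw [setIntegral_indicator hAa, setIntegral_indicator hAa] at h3
      rw [Set.inter_comm Aa G]
      exact h3
    rw [h1, h2] at hLHS
    have hconv : ∀ g : Ω → ℝ,
        ∫ ω, e' ω * G.indicator g ω ∂P = ∫ ω in G, e' ω * g ω ∂P := by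
      intro g
      rw [← integral_indicator hG0]
      congr 1; funext ω; by_cases h : ω ∈ G <;> simp [h]
    rw [hconv Ma, hconv Ya] at hLHS
    exact hLHS
  set u : Ω → ℝ := (P[Ma|mX']) with hud
  set v : Ω → ℝ := (P[Ya|mX']) with hvd
  have hu_sm : StronglyMeasurable[mX'] u := stronglyMeasurable_condExp
  have hv_sm : StronglyMeasurable[mX'] v := stronglyMeasurable_condExp
  have hu_int : Integrable u P := integrable_condExp
  have hv_int : Integrable v P := integrable_condExp
  have hMa_meas : Measurable Ma := hma.comp (hX.prodMk (hS₁a.prodMk hS₂a))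
  have key4' : ∀ (g : Ω → ℝ), Measurable g → Integrable g P →
      ∀ G : Set Ω, MeasurableSet[mX'] G →
      ∫ ω in G, e' ω * (P[g|mX']) ω ∂P = ∫ ω in G, e' ω * g ω ∂P := by
    intro g hgmeas hgint G hG
    have hG0 : MeasurableSet G := hX_le _ hG
    have hgsm : StronglyMeasurable[mX'] (G.indicator e') := he'_sm.indicator hG
    have hgf : Integrable (G.indicator e' * g) P := by
      refine Integrable.mono hgint ?_ ?_
      · exact ((((he'_sm.mono hX_le).measurable).indicator hG0).mul
          hgmeas).aestronglyMeasurable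
      · filter_upwards [he'_bd] with ω hb
        simp only [Pi.mul_apply, Real.norm_eq_abs, abs_mul]
        by_cases h : ω ∈ G
        · rw [Set.indicator_of_mem h]
          calc |e' ω| * |g ω| ≤ 1 * |g ω| :=
                mul_le_mul_of_nonneg_right hb (abs_nonneg _)
            _ = |g ω| := one_mul _
        · rw [Set.indicator_of_notMem h]; simp [abs_nonneg]
    have h := aux_integral_mul_condexp hX_le hgsm hgf hgint
    have hconv : ∀ g' : Ω → ℝ,
        ∫ ω, G.indicator e' ω * g' ω ∂P = ∫ ω in G, e' ω * g' ω ∂P := by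
      intro g'
      rw [← integral_indicator hG0]
      congr 1; funext ω; by_cases h' : ω ∈ G <;> simp [h']
    rw [hconv, hconv] at h
    exact h
  have heu_int : Integrable (fun ω => e' ω * u ω) P := by
    refine Integrable.mono hu_int ?_ ?_
    · exact ((he'_sm.mono hX_le).measurable.mul
        ((hu_sm.mono hX_le).measurable)).aestronglyMeasurable
    · filter_upwards [he'_bd] with ω hb
      simp only [Real.norm_eq_abs, abs_mul]
      calc |e' ω| * |u ω| ≤ 1 * |u ω| := mul_le_mul_of_nonneg_right hb (abs_nonneg _)
        _ = |u ω| := one_mul _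
  have hev_int : Integrable (fun ω => e' ω * v ω) P := by
    refine Integrable.mono hv_int ?_ ?_
    · exact ((he'_sm.mono hX_le).measurable.mul
        ((hv_sm.mono hX_le).measurable)).aestronglyMeasurable
    · filter_upwards [he'_bd] with ω hb
      simp only [Real.norm_eq_abs, abs_mul]
      calc |e' ω| * |v ω| ≤ 1 * |v ω| := mul_le_mul_of_nonneg_right hb (abs_nonneg _)
        _ = |v ω| := one_mul _
  have hFz' : (fun ω => e' ω * u ω - e' ω * v ω) =ᵐ[P] 0 := by
    refine aux_ae_zero hX_le ((he'_sm.mul hu_sm).sub (he'_sm.mul hv_sm))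
      (heu_int.sub hev_int) ?_
    intro s hs
    have h1 := key4' Ma hMa_meas hmInt s hs
    have h2 := key4' Ya hYa hYa_int s hs
    rw [← hud] at h1
    rw [← hvd] at h2
    rw [integral_sub heu_int.integrableOn hev_int.integrableOn, h1, h2,
      key4 s hs, sub_self]
  have huv : u =ᵐ[P] v := by
    filter_upwards [hFz', he'_pos] with ω h0 hp
    have h1 : e' ω * u ω - e' ω * v ω = 0 := h0
    exact mul_left_cancel₀ hp.ne' (by linarith)
  calc ∫ ω, Ya ω ∂P = ∫ ω, v ω ∂P := (integral_condExp hX_le).symm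
    _ = ∫ ω, u ω ∂P := integral_congr_ae huv.symm
    _ = ∫ ω, Ma ω ∂P := integral_condExp hX_le


/-- **Identifiability of the long-term ATE (Theorem 4.2).** Under monotone missing, strong
ignorability, and sequential missing, `E[Y(1)] − E[Y(0)]` equals
`E[m₁(X, S₁(1), S₂(1))] − E[m₀(X, S₁(0), S₂(0))]`, where `m_a(X,S₁,S₂)` is any version of
`E[Y | σ(X,S₁,S₂)]` under `P(·|{A=a} ∩ {R₃=1})`. (Arm `1` is `true`, arm `0` is `false`.) -/
theorem stmt2
    {Ω 𝓧 : Type*} [mΩ : MeasurableSpace Ω] [StandardBorelSpace Ω] [Nonempty Ω]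
    [m𝓧 : MeasurableSpace 𝓧] [StandardBorelSpace 𝓧]
    (P : Measure Ω) [IsProbabilityMeasure P]
    (X : Ω → 𝓧) (hX : Measurable X)
    (A : Ω → Bool) (hA : Measurable A)
    -- potential outcomes and their observed versions (consistency)
    (S₁ S₂ Y : Bool → Ω → ℝ)
    (hS₁ : ∀ a, Measurable (S₁ a)) (hS₂ : ∀ a, Measurable (S₂ a))
    (hYmeas : ∀ a, Measurable (Y a)) (hYint : ∀ a, Integrable (Y a) P)
    (S₁o S₂o Yo : Ω → ℝ)
    (hS₁o : Measurable S₁o) (hS₂o : Measurable S₂o) (hYo : Measurable Yo)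
    (hcons₁ : S₁o = fun ω => S₁ (A ω) ω)
    (hcons₂ : S₂o = fun ω => S₂ (A ω) ω)
    (hconsY : Yo = fun ω => Y (A ω) ω)
    -- missingness indicators
    (R₁ R₂ R₃ : Ω → Bool)
    (hR₁ : Measurable R₁) (hR₂ : Measurable R₂) (hR₃ : Measurable R₃)
    -- Assumption 1 (monotone missing): R₃ ≤ R₂ ≤ R₁
    (hmono32 : ∀ ω, R₃ ω = true → R₂ ω = true)
    (hmono21 : ∀ ω, R₂ ω = true → R₁ ω = true)
    -- Assumption 2 (strong ignorability): (S₁(a), S₂(a), Y(a)) ⫫ A | σ(X), and overlap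
    (hunconf : ∀ a : Bool, CondIndep (MeasurableSpace.comap X m𝓧)
      (MeasurableSpace.comap (fun ω => (S₁ a ω, S₂ a ω, Y a ω)) inferInstance)
      (MeasurableSpace.comap A inferInstance) hX.comap_le P)
    (e : Bool → 𝓧 → ℝ) (he : ∀ a, Measurable (e a))
    (heVer : ∀ a : Bool, (fun ω => e a (X ω)) =ᵐ[P]
      P[({ω | A ω = a}).indicator (fun _ => (1 : ℝ)) | MeasurableSpace.comap X m𝓧])
    (hePos : ∀ a : Bool, ∀ᵐ ω ∂P, 0 < e a (X ω) ∧ e a (X ω) < 1)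
    -- Assumption 4 (sequential missing, observed form)
    (hseq3 : CondIndep
      (MeasurableSpace.comap X m𝓧 ⊔ MeasurableSpace.comap A inferInstance
        ⊔ MeasurableSpace.comap S₁o inferInstance ⊔ MeasurableSpace.comap S₂o inferInstance)
      (MeasurableSpace.comap R₃ inferInstance) (MeasurableSpace.comap Yo inferInstance)
      (sup_le (sup_le (sup_le hX.comap_le hA.comap_le) hS₁o.comap_le) hS₂o.comap_le) P)
    (hseq2 : CondIndep
      (MeasurableSpace.comap X m𝓧 ⊔ MeasurableSpace.comap A inferInstance
        ⊔ MeasurableSpace.comap S₁o inferInstance)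
      (MeasurableSpace.comap R₂ inferInstance) (MeasurableSpace.comap S₂o inferInstance)
      (sup_le (sup_le hX.comap_le hA.comap_le) hS₁o.comap_le) P)
    (hseq1 : CondIndep (MeasurableSpace.comap X m𝓧 ⊔ MeasurableSpace.comap A inferInstance)
      (MeasurableSpace.comap R₁ inferInstance) (MeasurableSpace.comap S₁o inferInstance)
      (sup_le hX.comap_le hA.comap_le) P)
    -- positivity of the selection scores
    (hr₃pos : ∀ᵐ ω ∂P, 0 < (P[({ω' | R₃ ω' = true}).indicator (fun _ => (1 : ℝ)) |
      MeasurableSpace.comap X m𝓧 ⊔ MeasurableSpace.comap A inferInstance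
        ⊔ MeasurableSpace.comap S₁o inferInstance ⊔ MeasurableSpace.comap S₂o inferInstance]) ω)
    (hr₂pos : ∀ᵐ ω ∂P, 0 < (P[({ω' | R₂ ω' = true}).indicator (fun _ => (1 : ℝ)) |
      MeasurableSpace.comap X m𝓧 ⊔ MeasurableSpace.comap A inferInstance
        ⊔ MeasurableSpace.comap S₁o inferInstance]) ω)
    (hr₁pos : ∀ᵐ ω ∂P, 0 < (P[({ω' | R₁ ω' = true}).indicator (fun _ => (1 : ℝ)) |
      MeasurableSpace.comap X m𝓧 ⊔ MeasurableSpace.comap A inferInstance]) ω)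
    -- positive probability of being observed in each arm
    (hab : ∀ a : Bool, 0 < P ({ω | A ω = a} ∩ {ω | R₃ ω = true}))
    -- regression functions: versions of E[Y | σ(X,S₁,S₂)] under P(·|{A=a} ∩ {R₃=1})
    (m : Bool → 𝓧 × ℝ × ℝ → ℝ) (hm : ∀ a, Measurable (m a))
    (hmVer : ∀ a : Bool, (fun ω => m a (X ω, S₁o ω, S₂o ω))
      =ᵐ[P[|{ω | A ω = a} ∩ {ω | R₃ ω = true}]]
      (P[|{ω | A ω = a} ∩ {ω | R₃ ω = true}])[Yo |
        MeasurableSpace.comap X m𝓧 ⊔ MeasurableSpace.comap S₁o inferInstance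
          ⊔ MeasurableSpace.comap S₂o inferInstance])
    (hmInt : ∀ a : Bool, Integrable (fun ω => m a (X ω, S₁ a ω, S₂ a ω)) P) :
    ∫ ω, Y true ω ∂P - ∫ ω, Y false ω ∂P
      = ∫ ω, m true (X ω, S₁ true ω, S₂ true ω) ∂P
        - ∫ ω, m false (X ω, S₁ false ω, S₂ false ω) ∂P := by

  have hYo_int : Integrable Yo P := by
    refine Integrable.mono ((hYint true).abs.add (hYint false).abs)
      hYo.aestronglyMeasurable (ae_of_all _ fun ω => ?_)
    have hYoω : Yo ω = Y (A ω) ω := by rw [hconsY]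
    rw [hYoω]
    simp only [Real.norm_eq_abs, Pi.add_apply, Pi.abs_apply]
    have hb : |Y (A ω) ω| ≤ |Y true ω| + |Y false ω| := by
      cases A ω
      · exact le_add_of_nonneg_left (abs_nonneg _)
      · exact le_add_of_nonneg_right (abs_nonneg _)
    exact hb.trans (le_abs_self _)
  have key : ∀ a : Bool, ∫ ω, Y a ω ∂P = ∫ ω, m a (X ω, S₁ a ω, S₂ a ω) ∂P := by
    intro a
    refine arm_integral_eq (MeasurableSpace.comap X m𝓧)
      (MeasurableSpace.comap A inferInstance)
      (MeasurableSpace.comap S₁o inferInstance)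
      (MeasurableSpace.comap S₂o inferInstance)
      (MeasurableSpace.comap Yo inferInstance)
      (MeasurableSpace.comap R₃ inferInstance)
      (MeasurableSpace.comap X m𝓧 ⊔ MeasurableSpace.comap A inferInstance
        ⊔ MeasurableSpace.comap S₁o inferInstance ⊔ MeasurableSpace.comap S₂o inferInstance)
      (MeasurableSpace.comap X m𝓧 ⊔ MeasurableSpace.comap S₁o inferInstance
        ⊔ MeasurableSpace.comap S₂o inferInstance)
      (MeasurableSpace.comap (fun ω => (S₁ a ω, S₂ a ω, Y a ω)) inferInstance)
      P X hX A hA a (S₁ a) (S₂ a) (Y a) (hS₁ a) (hS₂ a) (hYmeas a) (hYint a)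
      S₁o S₂o Yo hS₁o hS₂o hYo hYo_int R₃ hR₃ rfl rfl rfl rfl rfl rfl rfl rfl rfl
      (sup_le (sup_le (sup_le hX.comap_le hA.comap_le) hS₁o.comap_le) hS₂o.comap_le)
      (sup_le (sup_le hX.comap_le hS₁o.comap_le) hS₂o.comap_le)
      hX.comap_le
      (fun ω hω => by simp only [hcons₁, hω]) (fun ω hω => by simp only [hcons₂, hω])
      (fun ω hω => by simp only [hconsY, hω])
      (hunconf a) (e a) (he a) (heVer a) ((hePos a).mono fun ω h => h.1)
      hseq3 hr₃pos (hab a) (m a) (hm a) (hmVer a) (hmInt a)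
  rw [key true, key false]
end

section
/- Unconditional inverse probability weighting identity for the arm-wise long-term mean. Fix a ∈ {0,1}. Assume consistency, that (S₁(a), S₂(a), Y(a)) ⫫ A | σ(X), and that R₃ ⫫ Y | σ(X, A, S₁, S₂). Let e_a : 𝒳 → ℝ be measurable with e_a(X) a version of P(A=a | σ(X)) and e_a(X) > 0 P-a.s., and let r₃ be a σ(X, A, S₁, S₂)-measurable random variable that is a version of P(R₃=1 | σ(X, A, S₁, S₂)) with r₃ > 0 P-a.s. Assume 𝟙{A=a} · R₃ · Y / (e_a(X) · r₃) is P-integrable. Then E[ 𝟙{A=a} · R₃ · Y / (e_a(X) · r₃) ] = E[ Y(a) ]. -/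
open MeasureTheory ProbabilityTheory

section Aux

open MeasurableSpace Set

lemma condIndep_condexp_indicator_mul
    {Ω : Type*} {m' m₁ m₂ : MeasurableSpace Ω} [mΩ : MeasurableSpace Ω]
    [StandardBorelSpace Ω]
    (μ : Measure Ω) [IsProbabilityMeasure μ]
    (hm' : m' ≤ mΩ) (hm₁ : m₁ ≤ mΩ) (hm₂ : m₂ ≤ mΩ)
    (hCI : CondIndep m' m₁ m₂ hm' μ)
    {B : Set Ω} (hB : MeasurableSet[m₁] B)
    {f : Ω → ℝ} (hf : Measurable[m₂] f) (hfi : Integrable f μ) :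
    μ[fun ω => B.indicator (fun _ => (1:ℝ)) ω * f ω | m'] =ᵐ[μ]
      fun ω => (μ[B.indicator (fun _ => (1:ℝ)) | m']) ω * (μ[f | m']) ω := by
  have hfΩ : Measurable[mΩ] f := hf.mono hm₂ le_rfl
  have hBΩ : MeasurableSet[mΩ] B := hm₁ _ hB
  have hBf_int : Integrable (fun ω => B.indicator (fun _ => (1:ℝ)) ω * f ω) μ := by
    refine Integrable.mono hfi ((measurable_const.indicator hBΩ).mul hfΩ).aestronglyMeasurable
      (Filter.Eventually.of_forall fun ω => ?_)
    by_cases h : ω ∈ B <;>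
      simp [Set.indicator_of_mem, Set.indicator_of_notMem, h, abs_mul, abs_nonneg]
  have hB_ind_int : Integrable (B.indicator (fun _ => (1:ℝ))) μ :=
    (integrable_const (1:ℝ)).indicator hBΩ
  have h1 := condExp_ae_eq_integral_condExpKernel (μ := μ) hm' hBf_int
  have h2 := condExpKernel_ae_eq_condExp (μ := μ) hm' hBΩ
  have h3 := condExp_ae_eq_integral_condExpKernel (μ := μ) hm' hfi
  have hprod : ∀ᵐ ω ∂μ, ∀ q : ℚ,
      condExpKernel μ m' ω (B ∩ f ⁻¹' Set.Iic (q:ℝ))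
        = condExpKernel μ m' ω B * condExpKernel μ m' ω (f ⁻¹' Set.Iic (q:ℝ)) := by
    rw [ae_all_iff]
    intro q
    exact ae_of_ae_trim hm' (hCI B (f ⁻¹' Set.Iic (q:ℝ)) hB (hf measurableSet_Iic))
  have hint : ∀ᵐ ω ∂μ, Integrable f (condExpKernel μ m' ω) := hfi.condExpKernel_ae
  filter_upwards [h1, h2, h3, hprod, hint] with ω h1ω h2ω h3ω hprodω hintω
  rw [h1ω, ← h2ω, ← h3ω.symm]
  -- goal: ∫ y, 1_B y * f y ∂κω = (κω B).toReal * ∫ y, f y ∂κω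
  set ν := condExpKernel μ m' ω with hν
  haveI : IsProbabilityMeasure ν := inferInstance
  -- independence of generateFrom {B} and σ(f) under ν
  set p2 : Set (Set Ω) := Set.preimage f '' (⋃ q : ℚ, {Set.Iic (q:ℝ)}) with hp2def
  have hp2 : IsPiSystem p2 := by
    rintro s ⟨u, hu, rfl⟩ t ⟨v, hv, rfl⟩ -
    simp only [Set.mem_iUnion, Set.mem_singleton_iff] at hu hv
    obtain ⟨q, rfl⟩ := hu
    obtain ⟨q', rfl⟩ := hv
    refine ⟨Set.Iic ((min q q' : ℚ) : ℝ), ?_, ?_⟩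
    · simp only [Set.mem_iUnion, Set.mem_singleton_iff]
      exact ⟨min q q', rfl⟩
    · rw [← Set.preimage_inter, Set.Iic_inter_Iic]
      push_cast
      rfl
  have h2eq : (MeasurableSpace.comap f inferInstance : MeasurableSpace Ω)
      = MeasurableSpace.generateFrom p2 := by
    conv_lhs => rw [show (inferInstance : MeasurableSpace ℝ) = borel ℝ from rfl,
      Real.borel_eq_generateFrom_Iic_rat]
    rw [MeasurableSpace.comap_generateFrom]
  have hIndep : Indep (MeasurableSpace.generateFrom {B})
      (MeasurableSpace.comap f inferInstance) ν := by
    refine IndepSets.indep ?_ ?_ (IsPiSystem.singleton B) hp2 rfl h2eq ?_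
    · exact MeasurableSpace.generateFrom_le (by rintro s rfl; exact hBΩ)
    · exact hfΩ.comap_le
    · rintro t1 t2 ht1 ⟨u, hu, rfl⟩
      simp only [Set.mem_singleton_iff] at ht1
      simp only [Set.mem_iUnion, Set.mem_singleton_iff] at hu
      obtain ⟨q, rfl⟩ := hu
      subst ht1
      exact Filter.Eventually.of_forall fun _ => hprodω q
  have hg_meas : Measurable[MeasurableSpace.generateFrom {B}]
      (B.indicator (fun _ => (1:ℝ))) :=
    measurable_const.indicator (measurableSet_generateFrom rfl)
  have hIndepF : IndepFun (B.indicator (fun _ => (1:ℝ))) f ν :=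
    (IndepFun_iff_Indep _ _ _).mpr (indep_of_indep_of_le_left hIndep hg_meas.comap_le)
  have hg_int : Integrable (B.indicator (fun _ => (1:ℝ))) ν :=
    (integrable_const (1:ℝ)).indicator hBΩ
  have hmul := hIndepF.integral_mul_eq_mul_integral hg_int.aestronglyMeasurable hintω.aestronglyMeasurable
  have hBint : ∫ y, B.indicator (fun _ => (1:ℝ)) y ∂ν = ν.real B := by
    exact integral_indicator_one (μ := ν) hBΩ
  calc ∫ y, B.indicator (fun _ => (1:ℝ)) y * f y ∂ν
      = ∫ y, (B.indicator (fun _ => (1:ℝ)) * f) y ∂ν := rfl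
    _ = (∫ y, B.indicator (fun _ => (1:ℝ)) y ∂ν) * ∫ y, f y ∂ν := hmul
    _ = ν.real B * ∫ y, f y ∂ν := by rw [hBint]

theorem ipw_aux
    {Ω : Type*} {mX m𝒢 : MeasurableSpace Ω} [mΩ : MeasurableSpace Ω]
    (P : Measure Ω) [IsProbabilityMeasure P]
    (hmX : mX ≤ mΩ) (h𝒢 : m𝒢 ≤ mΩ) (hmX𝒢 : mX ≤ m𝒢)
    (BA BR : Set Ω) (hBA𝒢 : MeasurableSet[m𝒢] BA)
    (Yo Ya : Ω → ℝ) (hYo : Measurable[mΩ] Yo) (hYa : Measurable[mΩ] Ya)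
    (hYoInt : Integrable Yo P) (hYaInt : Integrable Ya P)
    (hYoYa : ∀ ω, BA.indicator (fun _ => (1:ℝ)) ω * Yo ω
      = BA.indicator (fun _ => (1:ℝ)) ω * Ya ω)
    (eX r₃ : Ω → ℝ) (heX : Measurable[mX] eX) (hr₃ : Measurable[m𝒢] r₃)
    (hePos : ∀ᵐ ω ∂P, 0 < eX ω) (hr₃Pos : ∀ᵐ ω ∂P, 0 < r₃ ω)
    (heVer : eX =ᵐ[P] P[BA.indicator (fun _ => (1:ℝ)) | mX])
    (hr₃Ver : r₃ =ᵐ[P] P[BR.indicator (fun _ => (1:ℝ)) | m𝒢])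
    (hfac1 : P[fun ω => BR.indicator (fun _ => (1:ℝ)) ω * Yo ω | m𝒢] =ᵐ[P]
      fun ω => (P[BR.indicator (fun _ => (1:ℝ)) | m𝒢]) ω * (P[Yo | m𝒢]) ω)
    (hfac2 : P[fun ω => BA.indicator (fun _ => (1:ℝ)) ω * Ya ω | mX] =ᵐ[P]
      fun ω => (P[BA.indicator (fun _ => (1:ℝ)) | mX]) ω * (P[Ya | mX]) ω)
    (hBRmΩ : MeasurableSet[mΩ] BR)
    (hWint : Integrable (fun ω => BA.indicator (fun _ => (1:ℝ)) ω
      * BR.indicator (fun _ => (1:ℝ)) ω * Yo ω / (eX ω * r₃ ω)) P) :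
    ∫ ω, BA.indicator (fun _ => (1:ℝ)) ω * BR.indicator (fun _ => (1:ℝ)) ω * Yo ω
        / (eX ω * r₃ ω) ∂P
      = ∫ ω, Ya ω ∂P := by
  have hBAmΩ : MeasurableSet[mΩ] BA := h𝒢 _ hBA𝒢
  set IA : Ω → ℝ := BA.indicator (fun _ => (1:ℝ)) with hIAdef
  set IR : Ω → ℝ := BR.indicator (fun _ => (1:ℝ)) with hIRdef
  have hIA𝒢 : Measurable[m𝒢] IA := measurable_const.indicator hBA𝒢
  have hIAmΩ : Measurable[mΩ] IA := measurable_const.indicator hBAmΩ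
  have hIRmΩ : Measurable[mΩ] IR := measurable_const.indicator hBRmΩ
  have habs_ind : ∀ (B : Set Ω) (g : Ω → ℝ) ω,
      ‖B.indicator (fun _ => (1:ℝ)) ω * g ω‖ ≤ ‖g ω‖ := by
    intro B g ω
    by_cases h : ω ∈ B <;>
      simp [Set.indicator_of_mem, Set.indicator_of_notMem, h, norm_nonneg]
  have hIRYoInt : Integrable (fun ω => IR ω * Yo ω) P :=
    Integrable.mono hYoInt ((hIRmΩ.mul hYo).aestronglyMeasurable)
      (Filter.Eventually.of_forall fun ω => habs_ind BR Yo ω)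
  have hIAYoInt : Integrable (fun ω => IA ω * Yo ω) P :=
    Integrable.mono hYoInt ((hIAmΩ.mul hYo).aestronglyMeasurable)
      (Filter.Eventually.of_forall fun ω => habs_ind BA Yo ω)
  -- weight and observed missing-outcome product
  set g : Ω → ℝ := fun ω => IA ω / (eX ω * r₃ ω) with hgdef
  set f₀ : Ω → ℝ := fun ω => IR ω * Yo ω with hf₀def
  have hg𝒢 : StronglyMeasurable[m𝒢] g :=
    (hIA𝒢.div ((heX.mono hmX𝒢 le_rfl).mul hr₃)).stronglyMeasurable
  have hW_eq : (fun ω => IA ω * IR ω * Yo ω / (eX ω * r₃ ω)) = g * f₀ := by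
    funext ω
    simp only [hgdef, hf₀def, Pi.mul_apply]
    ring
  have hWint' : Integrable (g * f₀) P := by rw [← hW_eq]; exact hWint
  -- Step 1: pull out the 𝒢-measurable weight
  have hstep1 : P[g * f₀ | m𝒢] =ᵐ[P] g * P[f₀ | m𝒢] :=
    condExp_mul_of_stronglyMeasurable_left hg𝒢 hWint' hIRYoInt
  -- Step 2: factor the missingness indicator and replace by r₃
  have hstep2 : P[f₀ | m𝒢] =ᵐ[P] fun ω => r₃ ω * (P[Yo | m𝒢]) ω := by
    refine hfac1.trans ?_
    filter_upwards [hr₃Ver] with ω hω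
    rw [← hω]
  -- combine and cancel r₃
  set T : Ω → ℝ := fun ω => IA ω / eX ω * (P[Yo | m𝒢]) ω with hTdef
  have hT : P[g * f₀ | m𝒢] =ᵐ[P] T := by
    refine hstep1.trans ?_
    have : g * P[f₀ | m𝒢] =ᵐ[P] g * fun ω => r₃ ω * (P[Yo | m𝒢]) ω :=
      Filter.EventuallyEq.mul Filter.EventuallyEq.rfl hstep2
    refine this.trans ?_
    filter_upwards [hr₃Pos, hePos] with ω hr he'
    simp only [Pi.mul_apply, hgdef, hTdef]
    field_simp
  have hTint : Integrable T P := integrable_condExp.congr hT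
  -- replace Yo by Ya inside
  have hpull2 : P[fun ω => IA ω * Yo ω | m𝒢] =ᵐ[P] IA * P[Yo | m𝒢] :=
    condExp_mul_of_stronglyMeasurable_left hIA𝒢.stronglyMeasurable hIAYoInt hYoInt
  set F : Ω → ℝ := P[fun ω => IA ω * Ya ω | m𝒢] with hFdef
  set T' : Ω → ℝ := (fun ω => (eX ω)⁻¹) * F with hT'def
  have hIAYoYa : (fun ω => IA ω * Yo ω) = fun ω => IA ω * Ya ω := funext hYoYa
  have hTT' : T =ᵐ[P] T' := by
    have hpull2' : F =ᵐ[P] IA * P[Yo | m𝒢] := by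
      rw [hFdef, ← hIAYoYa]
      exact hpull2
    filter_upwards [hpull2'] with ω hω
    simp only [hTdef, hT'def, Pi.mul_apply, hω, div_eq_inv_mul]
    ring
  have hT'int : Integrable T' P := hTint.congr hTT'
  -- condition on mX
  have heinv : StronglyMeasurable[mX] fun ω => (eX ω)⁻¹ := heX.inv.stronglyMeasurable
  have hstep3 : P[T' | mX] =ᵐ[P] (fun ω => (eX ω)⁻¹) * P[F | mX] :=
    condExp_mul_of_stronglyMeasurable_left heinv (by rw [← hT'def]; exact hT'int) integrable_condExp
  have htower : P[F | mX] =ᵐ[P] P[fun ω => IA ω * Ya ω | mX] :=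
    condExp_condExp_of_le hmX𝒢 h𝒢
  have hstep4 : P[fun ω => IA ω * Ya ω | mX] =ᵐ[P] fun ω => eX ω * (P[Ya | mX]) ω := by
    refine hfac2.trans ?_
    filter_upwards [heVer] with ω hω
    rw [← hω]
  have hfinal : P[T' | mX] =ᵐ[P] P[Ya | mX] := by
    refine hstep3.trans ?_
    have h1 : (fun ω => (eX ω)⁻¹) * P[F | mX] =ᵐ[P]
        (fun ω => (eX ω)⁻¹) * fun ω => eX ω * (P[Ya | mX]) ω :=
      Filter.EventuallyEq.mul Filter.EventuallyEq.rfl (htower.trans hstep4)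
    refine h1.trans ?_
    filter_upwards [hePos] with ω he'
    simp only [Pi.mul_apply]
    rw [← mul_assoc, inv_mul_cancel₀ (ne_of_gt he'), one_mul]
  -- chain of integrals
  calc ∫ ω, IA ω * IR ω * Yo ω / (eX ω * r₃ ω) ∂P
      = ∫ ω, (g * f₀) ω ∂P := by rw [← hW_eq]
    _ = ∫ ω, (P[g * f₀ | m𝒢]) ω ∂P := (integral_condExp h𝒢).symm
    _ = ∫ ω, T ω ∂P := integral_congr_ae hT
    _ = ∫ ω, T' ω ∂P := integral_congr_ae hTT'
    _ = ∫ ω, (P[T' | mX]) ω ∂P := (integral_condExp hmX).symm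
    _ = ∫ ω, (P[Ya | mX]) ω ∂P := integral_congr_ae hfinal
    _ = ∫ ω, Ya ω ∂P := integral_condExp hmX


end Aux

/-- **Unconditional inverse probability weighting identity for the arm-wise long-term
mean.** Under consistency, unconfoundedness and sequential missingness, with a.s. positive
propensity and selection scores, `E[𝟙{A=a}·R₃·Y/(e_a(X)·r₃)] = E[Y(a)]`. -/
theorem stmt4
    {Ω 𝓧 : Type*} [mΩ : MeasurableSpace Ω] [StandardBorelSpace Ω] [Nonempty Ω]
    [m𝓧 : MeasurableSpace 𝓧] [StandardBorelSpace 𝓧]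
    (P : Measure Ω) [IsProbabilityMeasure P]
    (X : Ω → 𝓧) (hX : Measurable X)
    (A : Ω → Bool) (hA : Measurable A)
    (S₁ S₂ Y : Bool → Ω → ℝ)
    (hS₁ : ∀ a, Measurable (S₁ a)) (hS₂ : ∀ a, Measurable (S₂ a))
    (hYmeas : ∀ a, Measurable (Y a)) (hYint : ∀ a, Integrable (Y a) P)
    (S₁o S₂o Yo : Ω → ℝ)
    (hS₁o : Measurable S₁o) (hS₂o : Measurable S₂o) (hYo : Measurable Yo)
    (hcons₁ : S₁o = fun ω => S₁ (A ω) ω)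
    (hcons₂ : S₂o = fun ω => S₂ (A ω) ω)
    (hconsY : Yo = fun ω => Y (A ω) ω)
    (R₃ : Ω → Bool) (hR₃ : Measurable R₃)
    -- fixed arm
    (a : Bool)
    -- unconfoundedness for arm a
    (hunconf : CondIndep (MeasurableSpace.comap X m𝓧)
      (MeasurableSpace.comap (fun ω => (S₁ a ω, S₂ a ω, Y a ω)) inferInstance)
      (MeasurableSpace.comap A inferInstance) hX.comap_le P)
    -- sequential missingness of the long-term outcome
    (hseq3 : CondIndep
      (MeasurableSpace.comap X m𝓧 ⊔ MeasurableSpace.comap A inferInstance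
        ⊔ MeasurableSpace.comap S₁o inferInstance ⊔ MeasurableSpace.comap S₂o inferInstance)
      (MeasurableSpace.comap R₃ inferInstance) (MeasurableSpace.comap Yo inferInstance)
      (sup_le (sup_le (sup_le hX.comap_le hA.comap_le) hS₁o.comap_le) hS₂o.comap_le) P)
    -- propensity score
    (e : 𝓧 → ℝ) (he : Measurable e)
    (heVer : (fun ω => e (X ω)) =ᵐ[P]
      P[({ω | A ω = a}).indicator (fun _ => (1 : ℝ)) | MeasurableSpace.comap X m𝓧])
    (hePos : ∀ᵐ ω ∂P, 0 < e (X ω))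
    -- selection score
    (r₃ : Ω → ℝ)
    (hr₃Meas : Measurable[MeasurableSpace.comap X m𝓧 ⊔ MeasurableSpace.comap A inferInstance
      ⊔ MeasurableSpace.comap S₁o inferInstance ⊔ MeasurableSpace.comap S₂o inferInstance] r₃)
    (hr₃Ver : r₃ =ᵐ[P] P[({ω | R₃ ω = true}).indicator (fun _ => (1 : ℝ)) |
      MeasurableSpace.comap X m𝓧 ⊔ MeasurableSpace.comap A inferInstance
        ⊔ MeasurableSpace.comap S₁o inferInstance ⊔ MeasurableSpace.comap S₂o inferInstance])
    (hr₃Pos : ∀ᵐ ω ∂P, 0 < r₃ ω)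
    -- integrability of the weighted outcome
    (hWint : Integrable (fun ω => ({ω' | A ω' = a}).indicator (fun _ => (1 : ℝ)) ω
      * ({ω' | R₃ ω' = true}).indicator (fun _ => (1 : ℝ)) ω * Yo ω / (e (X ω) * r₃ ω)) P) :
    ∫ ω, ({ω' | A ω' = a}).indicator (fun _ => (1 : ℝ)) ω
        * ({ω' | R₃ ω' = true}).indicator (fun _ => (1 : ℝ)) ω * Yo ω / (e (X ω) * r₃ ω) ∂P
      = ∫ ω, Y a ω ∂P := by
  have h𝒢 : MeasurableSpace.comap X m𝓧 ⊔ MeasurableSpace.comap A inferInstance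
      ⊔ MeasurableSpace.comap S₁o inferInstance ⊔ MeasurableSpace.comap S₂o inferInstance ≤ mΩ :=
    sup_le (sup_le (sup_le hX.comap_le hA.comap_le) hS₁o.comap_le) hS₂o.comap_le
  have hmX𝒢 : MeasurableSpace.comap X m𝓧 ≤ MeasurableSpace.comap X m𝓧
      ⊔ MeasurableSpace.comap A inferInstance
      ⊔ MeasurableSpace.comap S₁o inferInstance ⊔ MeasurableSpace.comap S₂o inferInstance :=
    le_sup_left.trans (le_sup_left.trans le_sup_left)
  have hmA𝒢 : (MeasurableSpace.comap A inferInstance : MeasurableSpace Ω)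
      ≤ MeasurableSpace.comap X m𝓧 ⊔ MeasurableSpace.comap A inferInstance
      ⊔ MeasurableSpace.comap S₁o inferInstance ⊔ MeasurableSpace.comap S₂o inferInstance :=
    le_sup_right.trans (le_sup_left.trans le_sup_left)
  have hBA_comap : MeasurableSet[MeasurableSpace.comap A inferInstance] {ω | A ω = a} :=
    ⟨{a}, trivial, rfl⟩
  have hBR_comap : MeasurableSet[MeasurableSpace.comap R₃ inferInstance] {ω | R₃ ω = true} :=
    ⟨{true}, trivial, rfl⟩
  have hBR : MeasurableSet[mΩ] {ω | R₃ ω = true} := hR₃.comap_le _ hBR_comap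
  have hYoInt : Integrable Yo P := by
    refine Integrable.mono' ((hYint false).abs.add (hYint true).abs) hYo.aestronglyMeasurable
      (Filter.Eventually.of_forall fun ω => ?_)
    simp only [hconsY, Pi.add_apply, Pi.abs_apply, Real.norm_eq_abs]
    rcases Bool.eq_false_or_eq_true (A ω) with h | h <;> rw [h]
    · exact le_add_of_nonneg_left (abs_nonneg _)
    · exact le_add_of_nonneg_right (abs_nonneg _)
  have hYoYa : ∀ ω, ({ω' | A ω' = a}).indicator (fun _ => (1:ℝ)) ω * Yo ω
      = ({ω' | A ω' = a}).indicator (fun _ => (1:ℝ)) ω * Y a ω := by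
    intro ω
    by_cases h : A ω = a
    · have hYoω : Yo ω = Y a ω := by simp only [hconsY, h]
      rw [hYoω]
    · have h' : ω ∉ {ω' | A ω' = a} := h
      rw [Set.indicator_of_notMem h', zero_mul, zero_mul]
  have hYo_comap : Measurable[MeasurableSpace.comap Yo inferInstance] Yo :=
    Measurable.of_comap_le le_rfl
  have htriple : Measurable (fun ω => (S₁ a ω, S₂ a ω, Y a ω)) :=
    (hS₁ a).prodMk ((hS₂ a).prodMk (hYmeas a))
  have hYa_comap : Measurable[MeasurableSpace.comap
      (fun ω => (S₁ a ω, S₂ a ω, Y a ω)) inferInstance] (Y a) :=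
    (measurable_snd.comp measurable_snd).comp (Measurable.of_comap_le le_rfl)
  have hfac1 := condIndep_condexp_indicator_mul P h𝒢 hR₃.comap_le hYo.comap_le hseq3
    hBR_comap hYo_comap hYoInt
  have hfac2 := condIndep_condexp_indicator_mul P hX.comap_le hA.comap_le htriple.comap_le
    (Kernel.Indep.symm hunconf) hBA_comap hYa_comap (hYint a)
  exact ipw_aux P hX.comap_le h𝒢 hmX𝒢 {ω | A ω = a} {ω | R₃ ω = true} (hmA𝒢 _ hBA_comap)
    Yo (Y a) hYo (hYmeas a) hYoInt (hYint a) hYoYa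
    (fun ω => e (X ω)) r₃ (he.comp (Measurable.of_comap_le le_rfl)) hr₃Meas
    hePos hr₃Pos heVer hr₃Ver hfac1 hfac2 hBR hWint
end

section
/- Factorization and identifiability of the selection score r₃ (Proposition 4.3). Assume R₃ ≤ R₂ ≤ R₁ pointwise (monotone missing); R₂ ⫫ S₂ | σ(X, A, S₁); R₁ ⫫ S₁ | σ(X, A); P(R₁=1) > 0 and P(R₂=1) > 0; and that the selection scores r₁ := P(R₁=1 | σ(X, A)) and r₂ := P(R₂=1 | σ(X, A, S₁)) are P-a.s. strictly positive. Let g₃ be any σ(X, A, S₁, S₂)-measurable version of P(R₃=1 | σ(X, A, S₁, S₂)) computed under the conditional measure P(·|{R₂=1}); let g₂ be any σ(X, A, S₁)-measurable version of P(R₂=1 | σ(X, A, S₁)) computed under the conditional measure P(·|{R₁=1}); and let g₁ be any version of P(R₁=1 | σ(X, A)) under P. Then P(R₃=1 | σ(X, A, S₁, S₂)) = g₃ · g₂ · g₁ P-almost surely. -/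
open MeasureTheory ProbabilityTheory

set_option linter.unusedSectionVars false

section Aux

variable {Ω : Type*} [mΩ : MeasurableSpace Ω]

private lemma indic_le_one (t : Set Ω) (ω : Ω) :
    t.indicator (fun _ => (1 : ℝ)) ω ≤ 1 := by
  classical
  by_cases hω : ω ∈ t <;> simp [hω]

private lemma indic_nonneg (t : Set Ω) (ω : Ω) :
    0 ≤ t.indicator (fun _ => (1 : ℝ)) ω :=
  Set.indicator_nonneg (fun _ _ => zero_le_one) ω

private lemma setIntegral_indic (P : Measure Ω) {t : Set Ω} (ht : MeasurableSet[mΩ] t)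
    (G : Set Ω) :
    ∫ ω in G, t.indicator (fun _ => (1 : ℝ)) ω ∂P = (P (G ∩ t)).toReal := by
  rw [setIntegral_indicator ht, setIntegral_const, smul_eq_mul, mul_one]
  rfl

/-- Factorization step: if `t ⊆ s`, `P s ≠ 0` and `g` is an `m`-measurable version of
`P[1_t | m]` under `P[|s]`, then `P[1_t|m] = g * P[1_s|m]` a.e. `P`. -/
private lemma key_step (P : Measure Ω) [IsProbabilityMeasure P] {m : MeasurableSpace Ω}
    (hm : m ≤ mΩ) {s t : Set Ω} (hs : MeasurableSet[mΩ] s) (ht : MeasurableSet[mΩ] t)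
    (hts : t ⊆ s) (hs0 : P s ≠ 0) {g : Ω → ℝ} (hgm : Measurable[m] g)
    (hgv : g =ᵐ[P[|s]] (P[|s])[t.indicator (fun _ => (1 : ℝ)) | m]) :
    P[t.indicator (fun _ => (1 : ℝ)) | m]
      =ᵐ[P] fun ω => g ω * (P[s.indicator (fun _ => (1 : ℝ)) | m]) ω := by
  classical
  letI : MeasurableSpace Ω := mΩ
  haveI : IsProbabilityMeasure (P[|s]) := cond_isProbabilityMeasure hs0
  set h : Ω → ℝ := P[s.indicator (fun _ => (1 : ℝ)) | m] with hh
  have hint_t : Integrable (t.indicator (fun _ => (1 : ℝ))) P :=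
    (integrable_const (1 : ℝ)).indicator ht
  have hint_s : Integrable (s.indicator (fun _ => (1 : ℝ))) P :=
    (integrable_const (1 : ℝ)).indicator hs
  have hint_t' : Integrable (t.indicator (fun _ => (1 : ℝ))) (P[|s]) :=
    (integrable_const (1 : ℝ)).indicator ht
  -- the clipped version of g
  set g' : Ω → ℝ := fun ω => max 0 (min (g ω) 1) with hg'
  have hg'm : Measurable[m] g' := Measurable.max (@measurable_const _ _ _ m _)
    (Measurable.min hgm (@measurable_const _ _ _ m _))
  have hg'mΩ : Measurable[mΩ] g' := hg'm.mono hm le_rfl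
  have hg'bd : ∀ ω, ‖g' ω‖ ≤ 1 := by
    intro ω
    rw [Real.norm_eq_abs, abs_le]
    constructor
    · linarith [le_max_left (0:ℝ) (min (g ω) 1)]
    · exact max_le (by norm_num) (min_le_right _ _)
  -- g is in [0,1] a.e. under P[|s], hence g' = g a.e. under P[|s]
  have hce01 : ∀ᵐ ω ∂(P[|s]),
      0 ≤ ((P[|s])[t.indicator (fun _ => (1 : ℝ)) | m]) ω ∧
        ((P[|s])[t.indicator (fun _ => (1 : ℝ)) | m]) ω ≤ 1 := by
    have h0 : 0 ≤ᵐ[P[|s]] (P[|s])[t.indicator (fun _ => (1 : ℝ)) | m] :=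
      condExp_nonneg (Filter.Eventually.of_forall (indic_nonneg t))
    have h1 : (P[|s])[t.indicator (fun _ => (1 : ℝ)) | m]
        ≤ᵐ[P[|s]] (P[|s])[(fun _ => (1 : ℝ)) | m] :=
      condExp_mono hint_t' (integrable_const _) (Filter.Eventually.of_forall (indic_le_one t))
    filter_upwards [h0, h1] with ω h0 h1
    refine ⟨h0, ?_⟩
    rw [condExp_const hm] at h1
    exact h1
  have hgg' : g' =ᵐ[P[|s]] g := by
    filter_upwards [hgv, hce01] with ω hω h01
    rw [hg']
    simp only [hω]
    rw [min_eq_left h01.2, max_eq_right h01.1]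
  have hg'v : g' =ᵐ[P[|s]] (P[|s])[t.indicator (fun _ => (1 : ℝ)) | m] := hgg'.trans hgv
  -- the m-measurable set where g and g' differ is P[|s]-null, hence h = 0 a.e. there
  set N : Set Ω := {ω | g ω ≠ g' ω} with hN
  have hNm : MeasurableSet[m] N := by
    have : MeasurableSet[m] {ω | g ω = g' ω} :=
      hgm.stronglyMeasurable.measurableSet_eq_fun hg'm.stronglyMeasurable
    exact this.compl
  have hNnull : P (s ∩ N) = 0 := by
    have h1 : (P[|s]) N = 0 := by
      have h2 := hgg'.symm
      rw [Filter.EventuallyEq, ae_iff] at h2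
      simpa [hN, ne_comm] using h2
    rw [cond_apply hs] at h1
    rcases mul_eq_zero.mp h1 with h | h
    · exact absurd (ENNReal.inv_eq_zero.mp h) (measure_ne_top P s)
    · exact h
  have hh_nonneg : 0 ≤ᵐ[P] h :=
    condExp_nonneg (Filter.Eventually.of_forall (indic_nonneg s))
  have hhN : ∀ᵐ ω ∂P, ω ∈ N → h ω = 0 := by
    have hint : ∫ ω in N, h ω ∂P = 0 := by
      rw [hh, setIntegral_condExp hm hint_s hNm, setIntegral_indic P hs N]
      rw [Set.inter_comm] at hNnull
      simp [hNnull]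
    have h0 : h =ᵐ[P.restrict N] 0 := by
      have hnn : 0 ≤ᵐ[P.restrict N] h := ae_restrict_of_ae hh_nonneg
      have hi : Integrable h (P.restrict N) := integrable_condExp.restrict
      exact (integral_eq_zero_iff_of_nonneg_ae hnn hi).mp hint
    exact (ae_restrict_iff' (hm _ hNm)).mp h0
  -- main identity with g'
  have main : (fun ω => g' ω * h ω) =ᵐ[P] P[t.indicator (fun _ => (1 : ℝ)) | m] := by
    refine ae_eq_condExp_of_forall_setIntegral_eq hm hint_t ?_ ?_ ?_
    · intro G _ _
      exact (integrable_condExp.bdd_mul hg'mΩ.aestronglyMeasurable (Filter.Eventually.of_forall hg'bd)).integrableOn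
    · intro G hG _
      -- step 1 : ∫_G g'·h = ∫_G g'·1_s
      have hfun : (fun ω => g' ω * s.indicator (fun _ => (1 : ℝ)) ω) = s.indicator g' := by
        funext ω
        by_cases hω : ω ∈ s <;> simp [hω]
      have hint_mul : Integrable (fun ω => g' ω * s.indicator (fun _ => (1 : ℝ)) ω) P :=
        hint_s.bdd_mul hg'mΩ.aestronglyMeasurable (Filter.Eventually.of_forall hg'bd)
      have pull : P[(fun ω => g' ω * s.indicator (fun _ => (1 : ℝ)) ω) | m]
          =ᵐ[P] fun ω => g' ω * h ω :=
        condExp_mul_of_stronglyMeasurable_left hg'm.stronglyMeasurable hint_mul hint_s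
      have e1 : ∫ ω in G, g' ω * h ω ∂P
          = ∫ ω in G, g' ω * s.indicator (fun _ => (1 : ℝ)) ω ∂P := by
        have e1a : ∫ ω in G, g' ω * h ω ∂P
            = ∫ ω in G, (P[(fun ω => g' ω * s.indicator (fun _ => (1 : ℝ)) ω) | m]) ω ∂P :=
          (setIntegral_congr_ae (hm G hG) (pull.mono fun ω hω _ => hω)).symm
        rw [e1a, setIntegral_condExp hm hint_mul hG]
      -- step 2 : ∫_G g'·1_s = ∫_{G∩s} g'
      have e2 : ∫ ω in G, g' ω * s.indicator (fun _ => (1 : ℝ)) ω ∂P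
          = ∫ ω in G ∩ s, g' ω ∂P := by
        rw [hfun]
        exact setIntegral_indicator hs
      -- step 3 : via the conditional measure
      have hcond : ∀ f : Ω → ℝ, ∫ ω in G, f ω ∂(P[|s])
          = (P s)⁻¹.toReal * ∫ ω in G ∩ s, f ω ∂P := by
        intro f
        rw [ProbabilityTheory.cond, Measure.restrict_smul, integral_smul_measure,
          Measure.restrict_restrict (hm _ hG), smul_eq_mul]
      have e3 : ∫ ω in G, g' ω ∂(P[|s])
          = ∫ ω in G, t.indicator (fun _ => (1:ℝ)) ω ∂(P[|s]) := by
        have e3a : ∫ ω in G, g' ω ∂(P[|s])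
            = ∫ ω in G, ((P[|s])[t.indicator (fun _ => (1 : ℝ)) | m]) ω ∂(P[|s]) :=
          setIntegral_congr_ae (hm G hG) (hg'v.mono fun ω hω _ => hω)
        rw [e3a]
        exact setIntegral_condExp hm hint_t' hG
      have e4 : (P s)⁻¹.toReal * ∫ ω in G ∩ s, g' ω ∂P
          = (P s)⁻¹.toReal * ∫ ω in G ∩ s, t.indicator (fun _ => (1:ℝ)) ω ∂P := by
        rw [← hcond, ← hcond]; exact e3
      have hne : (P s)⁻¹.toReal ≠ 0 := by
        simp only [ne_eq, ENNReal.toReal_eq_zero_iff]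
        push_neg
        exact ⟨ENNReal.inv_ne_zero.mpr (measure_ne_top P s), ENNReal.inv_ne_top.mpr hs0⟩
      have e5 : ∫ ω in G ∩ s, g' ω ∂P = ∫ ω in G ∩ s, t.indicator (fun _ => (1:ℝ)) ω ∂P :=
        mul_left_cancel₀ hne e4
      have e6 : ∫ ω in G ∩ s, t.indicator (fun _ => (1:ℝ)) ω ∂P
          = ∫ ω in G, t.indicator (fun _ => (1:ℝ)) ω ∂P := by
        rw [setIntegral_indic P ht, setIntegral_indic P ht, Set.inter_assoc,
          Set.inter_eq_right.mpr hts]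
      rw [e1, e2, e5, e6]
    · exact (hg'm.stronglyMeasurable.mul stronglyMeasurable_condExp).aestronglyMeasurable
  -- conclude
  filter_upwards [main.symm, hhN] with ω hmain hN0
  rw [hmain]
  by_cases hωN : ω ∈ N
  · rw [hN0 hωN, mul_zero, mul_zero]
  · have : g ω = g' ω := not_not.mp hωN
    rw [this]

end Aux

/-- If `m₁ ⫫ m₂ | m'` and `s ∈ m₁`, then `P[1_s | m' ⊔ m₂] = P[1_s | m']` a.e. -/
private lemma condexp_sup_of_condIndep {Ω : Type*} [mΩ : MeasurableSpace Ω]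
    [StandardBorelSpace Ω] (P : Measure Ω) [IsProbabilityMeasure P]
    {m' m₁ m₂ : MeasurableSpace Ω} (hm' : m' ≤ mΩ) (hm₁ : m₁ ≤ mΩ) (hm₂ : m₂ ≤ mΩ)
    (hCI : CondIndep m' m₁ m₂ hm' P) {s : Set Ω} (hs : MeasurableSet[m₁] s) :
    P[s.indicator (fun _ => (1 : ℝ)) | m' ⊔ m₂]
      =ᵐ[P] P[s.indicator (fun _ => (1 : ℝ)) | m'] := by
  classical
  letI : MeasurableSpace Ω := mΩ
  have hiff := (condIndep_iff m' m₁ m₂ hm' hm₁ hm₂ P).mp hCI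
  set h : Ω → ℝ := P[s.indicator (fun _ => (1 : ℝ)) | m'] with hh
  have hsΩ : MeasurableSet[mΩ] s := hm₁ _ hs
  have hint_s : Integrable (s.indicator (fun _ => (1 : ℝ))) P :=
    (integrable_const (1 : ℝ)).indicator hsΩ
  have hsup : m' ⊔ m₂ ≤ mΩ := sup_le hm' hm₂
  -- the π-system of intersections
  set π : Set (Set Ω) :=
    {G | ∃ A B : Set Ω, MeasurableSet[m'] A ∧ MeasurableSet[m₂] B ∧ G = A ∩ B} with hπ
  have h_eq : (m' ⊔ m₂) = MeasurableSpace.generateFrom π := by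
    refine le_antisymm (sup_le ?_ ?_) (MeasurableSpace.generateFrom_le ?_)
    · intro A hA
      exact MeasurableSpace.measurableSet_generateFrom
        ⟨A, Set.univ, hA, MeasurableSet.univ, (Set.inter_univ A).symm⟩
    · intro B hB
      exact MeasurableSpace.measurableSet_generateFrom
        ⟨Set.univ, B, MeasurableSet.univ, hB, (Set.univ_inter B).symm⟩
    · rintro G ⟨A, B, hA, hB, rfl⟩
      exact ((le_sup_left : m' ≤ m' ⊔ m₂) _ hA).inter ((le_sup_right : m₂ ≤ m' ⊔ m₂) _ hB)
  have h_pi : IsPiSystem π := by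
    rintro G1 ⟨A1, B1, hA1, hB1, rfl⟩ G2 ⟨A2, B2, hA2, hB2, rfl⟩ -
    exact ⟨A1 ∩ A2, B1 ∩ B2, hA1.inter hA2, hB1.inter hB2, by ext ω; constructor <;>
      (intro hω; simp only [Set.mem_inter_iff] at *; tauto)⟩
  -- the set-integral identity on all of m' ⊔ m₂
  have claim : ∀ G, MeasurableSet[m' ⊔ m₂] G →
      ∫ ω in G, h ω ∂P = ∫ ω in G, s.indicator (fun _ => (1 : ℝ)) ω ∂P := by
    intro G hG
    refine MeasurableSpace.induction_on_inter (m := m' ⊔ m₂) (C := fun G _ =>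
      ∫ ω in G, h ω ∂P = ∫ ω in G, s.indicator (fun _ => (1 : ℝ)) ω ∂P)
      h_eq h_pi (by simp) ?_ ?_ ?_ G hG
    · -- generating sets
      rintro G ⟨A, B, hA, hB, rfl⟩
      have hBΩ : MeasurableSet[mΩ] B := hm₂ _ hB
      have hAΩ : MeasurableSet[mΩ] A := hm' _ hA
      have hfun : (fun ω => h ω * B.indicator (fun _ => (1 : ℝ)) ω) = B.indicator h := by
        funext ω
        by_cases hω : ω ∈ B <;> simp [hω]
      have hint_B : Integrable (B.indicator (fun _ => (1 : ℝ))) P :=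
        (integrable_const (1 : ℝ)).indicator hBΩ
      have hint_hB : Integrable (fun ω => h ω * B.indicator (fun _ => (1 : ℝ)) ω) P := by
        rw [hfun]; exact integrable_condExp.indicator hBΩ
      have pull : P[(fun ω => h ω * B.indicator (fun _ => (1 : ℝ)) ω) | m']
          =ᵐ[P] h * P[B.indicator (fun _ => (1 : ℝ)) | m'] :=
        condExp_mul_of_stronglyMeasurable_left stronglyMeasurable_condExp hint_hB hint_B
      have hprod : P[(fun ω => h ω * B.indicator (fun _ => (1 : ℝ)) ω) | m']
          =ᵐ[P] P[(s ∩ B).indicator (fun _ => (1 : ℝ)) | m'] :=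
        pull.trans (hiff s B hs hB).symm
      have e1 : ∫ ω in A ∩ B, h ω ∂P
          = ∫ ω in A, (fun ω => h ω * B.indicator (fun _ => (1 : ℝ)) ω) ω ∂P := by
        rw [hfun]
        exact (setIntegral_indicator hBΩ).symm
      have e2 : ∫ ω in A, (fun ω => h ω * B.indicator (fun _ => (1 : ℝ)) ω) ω ∂P
          = ∫ ω in A, (s ∩ B).indicator (fun _ => (1 : ℝ)) ω ∂P := by
        rw [← setIntegral_condExp hm' hint_hB hA,
          ← setIntegral_condExp hm' ((integrable_const (1 : ℝ)).indicator (hsΩ.inter hBΩ)) hA]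
        exact setIntegral_congr_ae (hm' _ hA) (hprod.mono fun ω hω _ => hω)
      rw [e1, e2, setIntegral_indic P (hsΩ.inter hBΩ) A, setIntegral_indic P hsΩ (A ∩ B),
        Set.inter_comm s B, ← Set.inter_assoc]
    · -- complements
      intro G hG hGC
      have hGΩ := hsup _ hG
      have t1 := integral_add_compl hGΩ (integrable_condExp :
        Integrable (P[s.indicator (fun _ => (1 : ℝ)) | m']) P)
      have t2 := integral_add_compl hGΩ hint_s
      have tot : ∫ ω, h ω ∂P = ∫ ω, s.indicator (fun _ => (1 : ℝ)) ω ∂P :=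
        integral_condExp hm'
      rw [hh] at hGC ⊢
      linarith
    · -- disjoint unions
      intro f hdisj hfm hC
      have hfΩ : ∀ i, MeasurableSet[mΩ] (f i) := fun i => hsup _ (hfm i)
      rw [integral_iUnion hfΩ hdisj integrable_condExp.integrableOn,
        integral_iUnion hfΩ hdisj hint_s.integrableOn]
      exact tsum_congr hC
  refine (ae_eq_condExp_of_forall_setIntegral_eq hsup hint_s
    (fun G _ _ => integrable_condExp.integrableOn) (fun G hG _ => claim G hG) ?_).symm
  exact ⟨h, stronglyMeasurable_condExp.mono le_sup_left, Filter.EventuallyEq.rfl⟩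

/-- **Factorization and identifiability of the selection score `r₃` (Proposition 4.3).**
Under monotone missing and the sequential missing mechanism, the selection score
`P(R₃=1 | σ(X,A,S₁,S₂))` factors `P`-a.s. as `g₃ · g₂ · g₁`, where `g₃` is any
`σ(X,A,S₁,S₂)`-measurable version of `P(R₃=1 | σ(X,A,S₁,S₂))` under `P(·|{R₂=1})`, `g₂` is
any `σ(X,A,S₁)`-measurable version of `P(R₂=1 | σ(X,A,S₁))` under `P(·|{R₁=1})`, and `g₁`
is any version of `P(R₁=1 | σ(X,A))` under `P`. -/
theorem stmt6
    {Ω 𝓧 : Type*} [mΩ : MeasurableSpace Ω] [StandardBorelSpace Ω] [Nonempty Ω]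
    [m𝓧 : MeasurableSpace 𝓧] [StandardBorelSpace 𝓧]
    (P : Measure Ω) [IsProbabilityMeasure P]
    (X : Ω → 𝓧) (hX : Measurable X)
    (A : Ω → Bool) (hA : Measurable A)
    (S₁ S₂ : Ω → ℝ) (hS₁ : Measurable S₁) (hS₂ : Measurable S₂)
    (R₁ R₂ R₃ : Ω → Bool)
    (hR₁ : Measurable R₁) (hR₂ : Measurable R₂) (hR₃ : Measurable R₃)
    -- monotone missing
    (hmono32 : ∀ ω, R₃ ω = true → R₂ ω = true)
    (hmono21 : ∀ ω, R₂ ω = true → R₁ ω = true)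
    -- sequential missing of the short-term outcomes
    (hseq2 : CondIndep
      (MeasurableSpace.comap X m𝓧 ⊔ MeasurableSpace.comap A inferInstance
        ⊔ MeasurableSpace.comap S₁ inferInstance)
      (MeasurableSpace.comap R₂ inferInstance) (MeasurableSpace.comap S₂ inferInstance)
      (sup_le (sup_le hX.comap_le hA.comap_le) hS₁.comap_le) P)
    (hseq1 : CondIndep (MeasurableSpace.comap X m𝓧 ⊔ MeasurableSpace.comap A inferInstance)
      (MeasurableSpace.comap R₁ inferInstance) (MeasurableSpace.comap S₁ inferInstance)
      (sup_le hX.comap_le hA.comap_le) P)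
    -- positive probability of observation at the first two stages
    (hR₁pos : 0 < P {ω | R₁ ω = true})
    (hR₂pos : 0 < P {ω | R₂ ω = true})
    -- a.s. positivity of the selection scores r₁ and r₂
    (hr₁pos : ∀ᵐ ω ∂P, 0 < (P[({ω' | R₁ ω' = true}).indicator (fun _ => (1 : ℝ)) |
      MeasurableSpace.comap X m𝓧 ⊔ MeasurableSpace.comap A inferInstance]) ω)
    (hr₂pos : ∀ᵐ ω ∂P, 0 < (P[({ω' | R₂ ω' = true}).indicator (fun _ => (1 : ℝ)) |
      MeasurableSpace.comap X m𝓧 ⊔ MeasurableSpace.comap A inferInstance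
        ⊔ MeasurableSpace.comap S₁ inferInstance]) ω)
    -- g₃ : σ(X,A,S₁,S₂)-measurable version of P(R₃=1 | σ(X,A,S₁,S₂)) under P(·|{R₂=1})
    (g₃ : Ω → ℝ)
    (hg₃Meas : Measurable[MeasurableSpace.comap X m𝓧 ⊔ MeasurableSpace.comap A inferInstance
      ⊔ MeasurableSpace.comap S₁ inferInstance ⊔ MeasurableSpace.comap S₂ inferInstance] g₃)
    (hg₃Ver : g₃ =ᵐ[P[|{ω | R₂ ω = true}]]
      (P[|{ω | R₂ ω = true}])[({ω' | R₃ ω' = true}).indicator (fun _ => (1 : ℝ)) |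
        MeasurableSpace.comap X m𝓧 ⊔ MeasurableSpace.comap A inferInstance
          ⊔ MeasurableSpace.comap S₁ inferInstance ⊔ MeasurableSpace.comap S₂ inferInstance])
    -- g₂ : σ(X,A,S₁)-measurable version of P(R₂=1 | σ(X,A,S₁)) under P(·|{R₁=1})
    (g₂ : Ω → ℝ)
    (hg₂Meas : Measurable[MeasurableSpace.comap X m𝓧 ⊔ MeasurableSpace.comap A inferInstance
      ⊔ MeasurableSpace.comap S₁ inferInstance] g₂)
    (hg₂Ver : g₂ =ᵐ[P[|{ω | R₁ ω = true}]]
      (P[|{ω | R₁ ω = true}])[({ω' | R₂ ω' = true}).indicator (fun _ => (1 : ℝ)) |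
        MeasurableSpace.comap X m𝓧 ⊔ MeasurableSpace.comap A inferInstance
          ⊔ MeasurableSpace.comap S₁ inferInstance])
    -- g₁ : any version of P(R₁=1 | σ(X,A)) under P
    (g₁ : Ω → ℝ)
    (hg₁Ver : g₁ =ᵐ[P] P[({ω' | R₁ ω' = true}).indicator (fun _ => (1 : ℝ)) |
      MeasurableSpace.comap X m𝓧 ⊔ MeasurableSpace.comap A inferInstance]) :
    P[({ω' | R₃ ω' = true}).indicator (fun _ => (1 : ℝ)) |
      MeasurableSpace.comap X m𝓧 ⊔ MeasurableSpace.comap A inferInstance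
        ⊔ MeasurableSpace.comap S₁ inferInstance ⊔ MeasurableSpace.comap S₂ inferInstance]
      =ᵐ[P] fun ω => g₃ ω * g₂ ω * g₁ ω := by
  classical
  set mXA : MeasurableSpace Ω :=
    MeasurableSpace.comap X m𝓧 ⊔ MeasurableSpace.comap A inferInstance with hmXA
  set m3 : MeasurableSpace Ω := mXA ⊔ MeasurableSpace.comap S₁ inferInstance with hm3
  set m4 : MeasurableSpace Ω := m3 ⊔ MeasurableSpace.comap S₂ inferInstance with hm4
  letI : MeasurableSpace Ω := mΩ
  have hmXA_le : mXA ≤ mΩ := sup_le hX.comap_le hA.comap_le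
  have hm3_le : m3 ≤ mΩ := sup_le hmXA_le hS₁.comap_le
  have hm4_le : m4 ≤ mΩ := sup_le hm3_le hS₂.comap_le
  set s₁ : Set Ω := {ω | R₁ ω = true} with hs₁def
  set s₂ : Set Ω := {ω | R₂ ω = true} with hs₂def
  set s₃ : Set Ω := {ω | R₃ ω = true} with hs₃def
  have hs₁ : MeasurableSet[mΩ] s₁ := hR₁ (measurableSet_singleton true)
  have hs₂ : MeasurableSet[mΩ] s₂ := hR₂ (measurableSet_singleton true)
  have hs₃ : MeasurableSet[mΩ] s₃ := hR₃ (measurableSet_singleton true)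
  have hs₂R : MeasurableSet[MeasurableSpace.comap R₂ inferInstance] s₂ :=
    ⟨{true}, measurableSet_singleton true, rfl⟩
  have hs₁R : MeasurableSet[MeasurableSpace.comap R₁ inferInstance] s₁ :=
    ⟨{true}, measurableSet_singleton true, rfl⟩
  -- step 1 : P[1_{s₃}|m4] = g₃ * P[1_{s₂}|m4]
  have A1 : P[s₃.indicator (fun _ => (1 : ℝ)) | m4]
      =ᵐ[P] fun ω => g₃ ω * (P[s₂.indicator (fun _ => (1 : ℝ)) | m4]) ω :=
    key_step P hm4_le hs₂ hs₃ (fun ω hω => hmono32 ω hω) hR₂pos.ne' hg₃Meas hg₃Ver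
  -- step 2 : P[1_{s₂}|m4] = P[1_{s₂}|m3]
  have A2 : P[s₂.indicator (fun _ => (1 : ℝ)) | m4]
      =ᵐ[P] P[s₂.indicator (fun _ => (1 : ℝ)) | m3] :=
    condexp_sup_of_condIndep P hm3_le hR₂.comap_le hS₂.comap_le hseq2 hs₂R
  -- step 3 : P[1_{s₂}|m3] = g₂ * P[1_{s₁}|m3]
  have A3 : P[s₂.indicator (fun _ => (1 : ℝ)) | m3]
      =ᵐ[P] fun ω => g₂ ω * (P[s₁.indicator (fun _ => (1 : ℝ)) | m3]) ω :=
    key_step P hm3_le hs₁ hs₂ (fun ω hω => hmono21 ω hω) hR₁pos.ne' hg₂Meas hg₂Ver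
  -- step 4 : P[1_{s₁}|m3] = P[1_{s₁}|mXA]
  have A4 : P[s₁.indicator (fun _ => (1 : ℝ)) | m3]
      =ᵐ[P] P[s₁.indicator (fun _ => (1 : ℝ)) | mXA] :=
    condexp_sup_of_condIndep P hmXA_le hR₁.comap_le hS₁.comap_le hseq1 hs₁R
  -- combine
  filter_upwards [A1, A2, A3, A4, hg₁Ver] with ω h1 h2 h3 h4 h5
  rw [h1, h2, h3, h4, ← h5]
  ring
end

section
/- Two-stage factorization of the second-stage selection score (intermediate step in the proof of Proposition 4.3). Assume R₂ ≤ R₁ pointwise; R₁ ⫫ S₁ | σ(X, A); P(R₁=1) > 0; and that r₁ := P(R₁=1 | σ(X, A)) is P-a.s. strictly positive. Let g₂ be any σ(X, A, S₁)-measurable version of P(R₂=1 | σ(X, A, S₁)) computed under the conditional measure P(·|{R₁=1}), and let g₁ be any version of P(R₁=1 | σ(X, A)) under P. Then P(R₂=1 | σ(X, A, S₁)) = g₂ · g₁ P-almost surely. -/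
open MeasureTheory ProbabilityTheory MeasurableSpace Set

lemma sup_eq_generateFrom_inter_s7 {Ω : Type*} (m' m₂ : MeasurableSpace Ω) :
    m' ⊔ m₂ = MeasurableSpace.generateFrom
      {H | ∃ G, MeasurableSet[m'] G ∧ ∃ T, MeasurableSet[m₂] T ∧ G ∩ T = H} := by
  refine le_antisymm (sup_le ?_ ?_) (MeasurableSpace.generateFrom_le ?_)
  · intro G hG
    exact measurableSet_generateFrom ⟨G, hG, Set.univ, MeasurableSet.univ, Set.inter_univ G⟩
  · intro T hT
    exact measurableSet_generateFrom ⟨Set.univ, MeasurableSet.univ, T, hT, Set.univ_inter T⟩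
  · rintro H ⟨G, hG, T, hT, rfl⟩
    exact ((show m' ≤ m' ⊔ m₂ from le_sup_left) G hG).inter ((show m₂ ≤ m' ⊔ m₂ from le_sup_right) T hT)

lemma isPiSystem_inter_sets_s7 {Ω : Type*} (m' m₂ : MeasurableSpace Ω) :
    IsPiSystem {H | ∃ G, MeasurableSet[m'] G ∧ ∃ T, MeasurableSet[m₂] T ∧ G ∩ T = H} := by
  rintro H1 ⟨G1, hG1, T1, hT1, rfl⟩ H2 ⟨G2, hG2, T2, hT2, rfl⟩ -
  exact ⟨G1 ∩ G2, hG1.inter hG2, T1 ∩ T2, hT1.inter hT2, by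
    rw [Set.inter_inter_inter_comm]⟩

set_option maxHeartbeats 1000000 in
lemma condexp_indicator_sup_of_factor {Ω : Type*} {m' m₂ : MeasurableSpace Ω}
    [mΩ : MeasurableSpace Ω]
    (P : Measure Ω) [IsProbabilityMeasure P]
    (hm' : m' ≤ mΩ) (hm₂ : m₂ ≤ mΩ) {s : Set Ω} (hs : MeasurableSet[mΩ] s)
    (h : ∀ t, MeasurableSet[m₂] t →
      (P[Set.indicator (s ∩ t) (fun _ => (1:ℝ)) | m']) =ᵐ[P]
        (P[Set.indicator s (fun _ => (1:ℝ)) | m']) * (P[Set.indicator t (fun _ => (1:ℝ)) | m'])) :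
    P[Set.indicator s (fun _ => (1:ℝ)) | m' ⊔ m₂] =ᵐ[P]
      P[Set.indicator s (fun _ => (1:ℝ)) | m'] := by
  have hsup : m' ⊔ m₂ ≤ mΩ := sup_le hm' hm₂
  set f : Ω → ℝ := Set.indicator s (fun _ => (1:ℝ)) with hf_def
  have hf_int : Integrable f P := (integrable_const (1:ℝ)).indicator hs
  set r : Ω → ℝ := P[f | m'] with hr_def
  have hr_int : Integrable r P := integrable_condExp
  have key : ∀ H, MeasurableSet[m' ⊔ m₂] H → ∫ ω in H, r ω ∂P = ∫ ω in H, f ω ∂P := by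
    have hgen := sup_eq_generateFrom_inter_s7 m' m₂
    have hpi := isPiSystem_inter_sets_s7 m' m₂
    intro H hH
    refine MeasurableSpace.induction_on_inter (m := m' ⊔ m₂)
      (C := fun H _ => ∫ ω in H, r ω ∂P = ∫ ω in H, f ω ∂P) hgen hpi ?_ ?_ ?_ ?_ H hH
    · simp
    · rintro H ⟨G, hG, T, hT, rfl⟩
      have hTm : MeasurableSet[mΩ] T := hm₂ T hT
      have hGm : MeasurableSet[mΩ] G := hm' G hG
      set oneT : Ω → ℝ := Set.indicator T (fun _ => (1:ℝ)) with honeT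
      have h1T_int : Integrable oneT P := (integrable_const (1:ℝ)).indicator hTm
      have h1T_meas : AEStronglyMeasurable oneT P :=
        ((measurable_one.indicator hTm).aestronglyMeasurable)
      have hrT_int : Integrable (r * oneT) P := by
        refine (hr_int.abs).mono' (hr_int.aestronglyMeasurable.mul h1T_meas) ?_
        filter_upwards with x
        simp only [Pi.mul_apply, norm_mul, Real.norm_eq_abs]
        have h1 : |oneT x| ≤ 1 := by
          by_cases hx : x ∈ T <;> simp [honeT, Set.indicator_of_mem, Set.indicator_of_notMem, hx]
        calc |r x| * |oneT x| ≤ |r x| * 1 := by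
              exact mul_le_mul_of_nonneg_left h1 (abs_nonneg _)
          _ = |r x| := mul_one _
      have hind : Set.indicator T r = fun ω => r ω * oneT ω := by
        funext ω
        by_cases hω : ω ∈ T <;> simp [honeT, hω]
      calc ∫ ω in G ∩ T, r ω ∂P
          = ∫ ω in G, Set.indicator T r ω ∂P := (setIntegral_indicator hTm).symm
        _ = ∫ ω in G, (r * oneT) ω ∂P := by rw [hind]; simp only [Pi.mul_apply]
        _ = ∫ ω in G, (P[r * oneT | m']) ω ∂P := (setIntegral_condExp hm' hrT_int hG).symm
        _ = ∫ ω in G, (r * P[oneT | m']) ω ∂P := by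
            refine integral_congr_ae (ae_restrict_of_ae ?_)
            exact condExp_mul_of_stronglyMeasurable_left stronglyMeasurable_condExp hrT_int h1T_int
        _ = ∫ ω in G, (P[Set.indicator (s ∩ T) (fun _ => (1:ℝ)) | m']) ω ∂P := by
            refine integral_congr_ae (ae_restrict_of_ae ?_)
            exact (h T hT).symm
        _ = ∫ ω in G, Set.indicator (s ∩ T) (fun _ => (1:ℝ)) ω ∂P :=
            setIntegral_condExp hm' ((integrable_const (1:ℝ)).indicator (hs.inter hTm)) hG
        _ = ∫ ω in G ∩ (s ∩ T), (1:ℝ) ∂P := setIntegral_indicator (hs.inter hTm)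
        _ = ∫ ω in (G ∩ T) ∩ s, (1:ℝ) ∂P := by
            rw [show G ∩ (s ∩ T) = (G ∩ T) ∩ s from by ext ω; simp [Set.mem_inter_iff]; tauto]
        _ = ∫ ω in G ∩ T, f ω ∂P := (setIntegral_indicator hs).symm
    · intro t ht hC
      have htm : MeasurableSet[mΩ] t := hsup t ht
      have h1 := integral_add_compl htm hr_int
      have h2 := integral_add_compl htm hf_int
      have h3 : ∫ ω, r ω ∂P = ∫ ω, f ω ∂P := integral_condExp hm'
      linarith
    · intro g hdisj hmeas hC
      rw [integral_iUnion (fun i => hsup _ (hmeas i)) hdisj hr_int.integrableOn,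
        integral_iUnion (fun i => hsup _ (hmeas i)) hdisj hf_int.integrableOn]
      exact tsum_congr hC
  exact (ae_eq_condExp_of_forall_setIntegral_eq hsup hf_int
    (fun H hH _ => hr_int.integrableOn) (fun H hH _ => key H hH)
    (stronglyMeasurable_condExp.mono (le_sup_left : m' ≤ m' ⊔ m₂)).aestronglyMeasurable).symm

set_option maxHeartbeats 1000000 in
/-- **Two-stage factorization of the second-stage selection score** (intermediate step in
the proof of Proposition 4.3). If `R₂ ≤ R₁`, `R₁ ⫫ S₁ | σ(X,A)`, `P(R₁=1) > 0` and
`r₁ = P(R₁=1 | σ(X,A))` is a.s. positive, then `P(R₂=1 | σ(X,A,S₁)) = g₂ · g₁` `P`-a.s.,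
where `g₂` is any `σ(X,A,S₁)`-measurable version of `P(R₂=1 | σ(X,A,S₁))` under
`P(·|{R₁=1})` and `g₁` is any version of `P(R₁=1 | σ(X,A))` under `P`. -/
theorem stmt7
    {Ω 𝓧 : Type*} [mΩ : MeasurableSpace Ω] [StandardBorelSpace Ω] [Nonempty Ω]
    [m𝓧 : MeasurableSpace 𝓧] [StandardBorelSpace 𝓧]
    (P : Measure Ω) [IsProbabilityMeasure P]
    (X : Ω → 𝓧) (hX : Measurable X)
    (A : Ω → Bool) (hA : Measurable A)
    (S₁ : Ω → ℝ) (hS₁ : Measurable S₁)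
    (R₁ R₂ : Ω → Bool) (hR₁ : Measurable R₁) (hR₂ : Measurable R₂)
    -- monotone missing
    (hmono21 : ∀ ω, R₂ ω = true → R₁ ω = true)
    -- sequential missing of the first-stage outcome
    (hseq1 : CondIndep (MeasurableSpace.comap X m𝓧 ⊔ MeasurableSpace.comap A inferInstance)
      (MeasurableSpace.comap R₁ inferInstance) (MeasurableSpace.comap S₁ inferInstance)
      (sup_le hX.comap_le hA.comap_le) P)
    -- positive probability of first-stage observation
    (hR₁pos : 0 < P {ω | R₁ ω = true})
    -- a.s. positivity of the selection score r₁
    (hr₁pos : ∀ᵐ ω ∂P, 0 < (P[({ω' | R₁ ω' = true}).indicator (fun _ => (1 : ℝ)) |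
      MeasurableSpace.comap X m𝓧 ⊔ MeasurableSpace.comap A inferInstance]) ω)
    -- g₂ : σ(X,A,S₁)-measurable version of P(R₂=1 | σ(X,A,S₁)) under P(·|{R₁=1})
    (g₂ : Ω → ℝ)
    (hg₂Meas : Measurable[MeasurableSpace.comap X m𝓧 ⊔ MeasurableSpace.comap A inferInstance
      ⊔ MeasurableSpace.comap S₁ inferInstance] g₂)
    (hg₂Ver : g₂ =ᵐ[P[|{ω | R₁ ω = true}]]
      (P[|{ω | R₁ ω = true}])[({ω' | R₂ ω' = true}).indicator (fun _ => (1 : ℝ)) |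
        MeasurableSpace.comap X m𝓧 ⊔ MeasurableSpace.comap A inferInstance
          ⊔ MeasurableSpace.comap S₁ inferInstance])
    -- g₁ : any version of P(R₁=1 | σ(X,A)) under P
    (g₁ : Ω → ℝ)
    (hg₁Ver : g₁ =ᵐ[P] P[({ω' | R₁ ω' = true}).indicator (fun _ => (1 : ℝ)) |
      MeasurableSpace.comap X m𝓧 ⊔ MeasurableSpace.comap A inferInstance]) :
    P[({ω' | R₂ ω' = true}).indicator (fun _ => (1 : ℝ)) |
      MeasurableSpace.comap X m𝓧 ⊔ MeasurableSpace.comap A inferInstance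
        ⊔ MeasurableSpace.comap S₁ inferInstance]
      =ᵐ[P] fun ω => g₂ ω * g₁ ω := by
  have hGle : (MeasurableSpace.comap X m𝓧 ⊔ MeasurableSpace.comap A inferInstance) ≤ mΩ :=
    sup_le hX.comap_le hA.comap_le
  have hm₂ : (MeasurableSpace.comap S₁ inferInstance : MeasurableSpace Ω) ≤ mΩ := hS₁.comap_le
  have hHle : (MeasurableSpace.comap X m𝓧 ⊔ MeasurableSpace.comap A inferInstance
      ⊔ MeasurableSpace.comap S₁ inferInstance) ≤ mΩ := sup_le hGle hm₂
  set s : Set Ω := {ω | R₁ ω = true} with hsdef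
  set u : Set Ω := {ω' | R₂ ω' = true} with hudef
  have hs : MeasurableSet s := hR₁ (measurableSet_singleton true)
  have hu : MeasurableSet u := hR₂ (measurableSet_singleton true)
  have husub : u ⊆ s := fun ω hω => hmono21 ω hω
  -- the conditional independence, expressed via condexp
  have hCI := (condIndep_iff _ _ _ (sup_le hX.comap_le hA.comap_le)
    hR₁.comap_le hS₁.comap_le P).mp hseq1
  have hfac : ∀ t, MeasurableSet[MeasurableSpace.comap S₁ inferInstance] t →
      (P[Set.indicator (s ∩ t) (fun _ => (1:ℝ)) | (MeasurableSpace.comap X m𝓧 ⊔ MeasurableSpace.comap A inferInstance)]) =ᵐ[P]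
        (P[Set.indicator s (fun _ => (1:ℝ)) | (MeasurableSpace.comap X m𝓧 ⊔ MeasurableSpace.comap A inferInstance)]) * (P[Set.indicator t (fun _ => (1:ℝ)) | (MeasurableSpace.comap X m𝓧 ⊔ MeasurableSpace.comap A inferInstance)]) := by
    intro t ht
    have hsR : MeasurableSet[MeasurableSpace.comap R₁ inferInstance] s :=
      ⟨{true}, trivial, rfl⟩
    exact hCI s t hsR ht
  -- tower property : P[1_s | (MeasurableSpace.comap X m𝓧 ⊔ MeasurableSpace.comap A inferInstance ⊔ MeasurableSpace.comap S₁ inferInstance)] = P[1_s | (MeasurableSpace.comap X m𝓧 ⊔ MeasurableSpace.comap A inferInstance)]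
  have htower : P[Set.indicator s (fun _ => (1:ℝ)) | (MeasurableSpace.comap X m𝓧 ⊔ MeasurableSpace.comap A inferInstance ⊔ MeasurableSpace.comap S₁ inferInstance)] =ᵐ[P]
      P[Set.indicator s (fun _ => (1:ℝ)) | (MeasurableSpace.comap X m𝓧 ⊔ MeasurableSpace.comap A inferInstance)] :=
    condexp_indicator_sup_of_factor P hGle hm₂ hs hfac
  -- conditional measure
  set Q := P[|s] with hQdef
  have hPs_ne : P s ≠ 0 := hR₁pos.ne'
  haveI : IsProbabilityMeasure Q := cond_isProbabilityMeasure hPs_ne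
  have hQsmul : Q = (P s)⁻¹ • P.restrict s := rfl
  have haeQ : ∀ {p : Ω → Prop}, (∀ᵐ ω ∂Q, p ω) → (∀ᵐ ω ∂P, ω ∈ s → p ω) := by
    intro p hp
    rw [hQsmul] at hp
    have h' : ∀ᵐ ω ∂(P.restrict s), p ω :=
      (Measure.ae_ennreal_smul_measure_iff (ENNReal.inv_ne_zero.mpr (measure_ne_top P s))).mp hp
    exact (ae_restrict_iff' hs).mp h'
  -- the indicator of u, integrable under Q and under P
  have huQint : Integrable (Set.indicator u (fun _ => (1:ℝ))) Q := (integrable_const 1).indicator hu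
  have huPint : Integrable (Set.indicator u (fun _ => (1:ℝ))) P := (integrable_const 1).indicator hu
  have hsPint : Integrable (Set.indicator s (fun _ => (1:ℝ))) P := (integrable_const 1).indicator hs
  -- a.e. bound on g₂ under Q
  have hg₂bdd : ∀ᵐ ω ∂Q, |g₂ ω| ≤ 1 := by
    have h0 : 0 ≤ᵐ[Q] Q[Set.indicator u (fun _ => (1:ℝ)) | (MeasurableSpace.comap X m𝓧 ⊔ MeasurableSpace.comap A inferInstance ⊔ MeasurableSpace.comap S₁ inferInstance)] :=
      condExp_nonneg (Filter.Eventually.of_forall fun ω =>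
        Set.indicator_nonneg (fun _ _ => zero_le_one) ω)
    have h1 : Q[Set.indicator u (fun _ => (1:ℝ)) | (MeasurableSpace.comap X m𝓧 ⊔ MeasurableSpace.comap A inferInstance ⊔ MeasurableSpace.comap S₁ inferInstance)] ≤ᵐ[Q] fun _ => (1:ℝ) := by
      have hmono : Set.indicator u (fun _ => (1:ℝ)) ≤ᵐ[Q] fun _ => (1:ℝ) := by
        refine Filter.Eventually.of_forall fun ω => ?_
        by_cases hω : ω ∈ u <;> simp [hω]
      have := condExp_mono (μ := Q) (m := (MeasurableSpace.comap X m𝓧 ⊔ MeasurableSpace.comap A inferInstance ⊔ MeasurableSpace.comap S₁ inferInstance)) huQint (integrable_const 1) hmono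
      rwa [condExp_const hHle] at this
    filter_upwards [hg₂Ver, h0, h1] with ω hω h0ω h1ω
    rw [hω, abs_le]
    refine ⟨?_, h1ω⟩
    have h0' := h0ω
    simp only [Pi.zero_apply] at h0'
    linarith
  -- the product function k = g₂ · 1_s
  set k : Ω → ℝ := fun ω => g₂ ω * Set.indicator s (fun _ => (1:ℝ)) ω with hkdef
  have hg₂m : Measurable g₂ := hg₂Meas.mono hHle le_rfl
  have hbP : ∀ᵐ ω ∂P, ‖k ω‖ ≤ (1:ℝ) := by
    filter_upwards [haeQ hg₂bdd] with ω hω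
    by_cases hωs : ω ∈ s
    · simpa [hkdef, Set.indicator_of_mem hωs, Real.norm_eq_abs] using hω hωs
    · simp [hkdef, Set.indicator_of_notMem hωs]
  have hk_meas : AEStronglyMeasurable k P :=
    ((hg₂m.mul (measurable_one.indicator hs)).aestronglyMeasurable)
  have hk_int : Integrable k P := (integrable_const (1:ℝ)).mono' hk_meas hbP
  -- transfer of set integrals between P and Q
  have htoReal_ne : (P s).toReal ≠ 0 :=
    ENNReal.toReal_ne_zero.mpr ⟨hPs_ne, measure_ne_top P s⟩
  have hsetQ : ∀ (φ : Ω → ℝ) (H : Set Ω), MeasurableSet H →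
      (P s).toReal * ∫ ω in H, φ ω ∂Q = ∫ ω in H ∩ s, φ ω ∂P := by
    intro φ H hHm
    rw [hQsmul, Measure.restrict_smul, integral_smul_measure,
      Measure.restrict_restrict hHm, ENNReal.toReal_inv, smul_eq_mul, ← mul_assoc,
      mul_inv_cancel₀ htoReal_ne, one_mul]
  -- key set-integral identity on (MeasurableSpace.comap X m𝓧 ⊔ MeasurableSpace.comap A inferInstance ⊔ MeasurableSpace.comap S₁ inferInstance)-sets
  have hDint : ∀ H, MeasurableSet[(MeasurableSpace.comap X m𝓧 ⊔ MeasurableSpace.comap A inferInstance ⊔ MeasurableSpace.comap S₁ inferInstance)] H →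
      ∫ ω in H, Set.indicator u (fun _ => (1:ℝ)) ω ∂P = ∫ ω in H, k ω ∂P := by
    intro H hH
    have hHm : MeasurableSet H := hHle H hH
    have e1 : ∫ ω in H, Set.indicator u (fun _ => (1:ℝ)) ω ∂P
        = ∫ ω in H ∩ s, Set.indicator u (fun _ => (1:ℝ)) ω ∂P := by
      rw [setIntegral_indicator hu, setIntegral_indicator hu,
        show H ∩ s ∩ u = H ∩ u from by
          ext ω
          constructor
          · intro hω; exact ⟨hω.1.1, hω.2⟩
          · intro hω; exact ⟨⟨hω.1, husub hω.2⟩, hω.2⟩]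
    have e2 : ∫ ω in H, k ω ∂P = ∫ ω in H ∩ s, g₂ ω ∂P := by
      have hke : k = Set.indicator s g₂ := by
        funext ω
        by_cases hω : ω ∈ s <;> simp [hkdef, hω]
      rw [hke, setIntegral_indicator hs]
    have e3 : ∫ ω in H, Set.indicator u (fun _ => (1:ℝ)) ω ∂Q = ∫ ω in H, g₂ ω ∂Q := by
      rw [← setIntegral_condExp hHle huQint hH]
      exact (integral_congr_ae (ae_restrict_of_ae hg₂Ver)).symm
    calc ∫ ω in H, Set.indicator u (fun _ => (1:ℝ)) ω ∂P
        = ∫ ω in H ∩ s, Set.indicator u (fun _ => (1:ℝ)) ω ∂P := e1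
      _ = (P s).toReal * ∫ ω in H, Set.indicator u (fun _ => (1:ℝ)) ω ∂Q :=
          (hsetQ _ H hHm).symm
      _ = (P s).toReal * ∫ ω in H, g₂ ω ∂Q := by rw [e3]
      _ = ∫ ω in H ∩ s, g₂ ω ∂P := hsetQ _ H hHm
      _ = ∫ ω in H, k ω ∂P := e2.symm
  -- conclude: P[1_u | (MeasurableSpace.comap X m𝓧 ⊔ MeasurableSpace.comap A inferInstance ⊔ MeasurableSpace.comap S₁ inferInstance)] = P[k | (MeasurableSpace.comap X m𝓧 ⊔ MeasurableSpace.comap A inferInstance ⊔ MeasurableSpace.comap S₁ inferInstance)]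
  have hkcond : P[Set.indicator u (fun _ => (1:ℝ)) | (MeasurableSpace.comap X m𝓧 ⊔ MeasurableSpace.comap A inferInstance ⊔ MeasurableSpace.comap S₁ inferInstance)] =ᵐ[P] P[k | (MeasurableSpace.comap X m𝓧 ⊔ MeasurableSpace.comap A inferInstance ⊔ MeasurableSpace.comap S₁ inferInstance)] := by
    refine (ae_eq_condExp_of_forall_setIntegral_eq hHle huPint
      (fun H hH _ => integrable_condExp.integrableOn)
      (fun H hH _ => ?_) stronglyMeasurable_condExp.aestronglyMeasurable).symm
    rw [setIntegral_condExp hHle hk_int hH]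
    exact (hDint H hH).symm
  -- pull out g₂
  have hpull : P[k | (MeasurableSpace.comap X m𝓧 ⊔ MeasurableSpace.comap A inferInstance ⊔ MeasurableSpace.comap S₁ inferInstance)] =ᵐ[P] g₂ * P[Set.indicator s (fun _ => (1:ℝ)) | (MeasurableSpace.comap X m𝓧 ⊔ MeasurableSpace.comap A inferInstance ⊔ MeasurableSpace.comap S₁ inferInstance)] :=
    condExp_mul_of_stronglyMeasurable_left (μ := P) hg₂Meas.stronglyMeasurable hk_int hsPint
  -- final chain
  refine hkcond.trans (hpull.trans ?_)
  filter_upwards [htower, hg₁Ver] with ω h1 h2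
  simp only [Pi.mul_apply]
  rw [h1, h2]
end
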